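/- arXiv:math/0508323 — 4 statements merged into one kernel-verified Lean document; each statement's English description precedes it below -/
import Mathlib

section
/- Let G and G_0 be graphs, let p = td(G_0), and let c be a q-centered coloring of G where q ≥ p. Then any subgraph H of G isomorphic to G_0 receives at least p colors in the coloring c. -/
open scoped Classical

universe u v

/-- A rooted forest given by its ancestor order: `le x y` means `x` is an ancestor of `y`
(or `x = y`); ancestors of any vertex form a chain. -/
structure RootedForest (V : Type u) where
  le : V → V → Prop
  le_refl : ∀ x, le x x
  le_antisymm : ∀ x y, le x y → le y x → x = y
  le_trans : ∀ x y z, le x y → le y z → le x z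
  ancestors_chain : ∀ x y z, le x z → le y z → le x y ∨ le y x

/-- The closure of a rooted forest: each vertex is joined to all its proper ancestors. -/
def RootedForest.clos {V : Type u} (F : RootedForest V) : SimpleGraph V where
  Adj x y := x ≠ y ∧ (F.le x y ∨ F.le y x)
  symm := by
    constructor
    rintro x y ⟨h1, h2⟩
    exact ⟨h1.symm, h2.symm⟩
  loopless := ⟨fun x h => h.1 rfl⟩

/-- The height of a rooted forest: maximum number of vertices on a root-to-vertex path. -/
noncomputable def RootedForest.height {V : Type u} [Fintype V] (F : RootedForest V) : ℕ :=
  Finset.univ.sup fun x => (Finset.univ.filter fun y => F.le y x).card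

/-- Tree-depth: minimum height of a rooted forest whose closure contains `G`. -/
noncomputable def treeDepth {V : Type u} [Fintype V] (G : SimpleGraph V) : ℕ :=
  sInf {n : ℕ | ∃ F : RootedForest V, G ≤ F.clos ∧ F.height ≤ n}

/-- `H` is a `k`-tree: there is a construction order in which every vertex is added
adjacent to a clique of size at most `k` among the earlier vertices. -/
def IsKTree {V : Type u} (k : ℕ) (H : SimpleGraph V) : Prop :=
  ∃ r : V → V → Prop, IsStrictTotalOrder V r ∧
    ∀ x : V, H.IsClique {y | r y x ∧ H.Adj y x} ∧ {y | r y x ∧ H.Adj y x}.ncard ≤ k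

/-- Tree-width: minimum `k` such that `G` is a subgraph of a `k`-tree. -/
noncomputable def treeWidth {V : Type u} [Fintype V] (G : SimpleGraph V) : ℕ :=
  sInf {k : ℕ | ∃ H : SimpleGraph V, G ≤ H ∧ IsKTree k H}

/-- A `p`-centered coloring: every connected subgraph either has a color appearing
exactly once, or receives at least `p` colors. -/
def IsCenteredColoring {V : Type u} {α : Type v} (p : ℕ) (G : SimpleGraph V)
    (c : V → α) : Prop :=
  ∀ S : Set V, (G.induce S).Connected →
    (∃ x ∈ S, ∀ y ∈ S, c y = c x → y = x) ∨ p ≤ (c '' S).ncard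

/-- A class of (finite) graphs. -/
def GraphClass : Type 1 := ∀ (V : Type) [Fintype V], SimpleGraph V → Prop

def HasLowTreeWidthColorings (C : GraphClass) : Prop :=
  ∀ p : ℕ, 1 ≤ p → ∃ N : ℕ, ∀ (V : Type) [Fintype V], ∀ G : SimpleGraph V, C V G →
    ∃ c : V → Fin N, ∀ I : Finset (Fin N), I.card ≤ p →
      ∀ K : (G.induce {v | c v ∈ I}).ConnectedComponent,
        treeWidth ((G.induce {v | c v ∈ I}).induce K.supp) ≤ I.card - 1

def HasLowTreeDepthColorings (C : GraphClass) : Prop :=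
  ∀ p : ℕ, 1 ≤ p → ∃ N : ℕ, ∀ (V : Type) [Fintype V], ∀ G : SimpleGraph V, C V G →
    ∃ c : V → Fin N, ∀ I : Finset (Fin N), I.card ≤ p →
      ∀ K : (G.induce {v | c v ∈ I}).ConnectedComponent,
        treeDepth ((G.induce {v | c v ∈ I}).induce K.supp) ≤ I.card

/-- `χ_p(G)`: minimum number of colors such that any `i < p` color classes induce a
subgraph of tree-depth at most `i`. -/
noncomputable def chiP {V : Type u} [Fintype V] (p : ℕ) (G : SimpleGraph V) : ℕ :=
  sInf {N : ℕ | ∃ c : V → Fin N, ∀ I : Finset (Fin N), I.card < p →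
    treeDepth (G.induce {v | c v ∈ I}) ≤ I.card}

/-- `H` is a minor of `G`: disjoint connected branch sets, one per vertex of `H`,
joined by edges of `G` as prescribed by the edges of `H`. -/
def IsMinorOf {W : Type v} {V : Type u} (H : SimpleGraph W) (G : SimpleGraph V) : Prop :=
  ∃ B : W → Set V, (∀ w, (G.induce (B w)).Connected) ∧
    (Pairwise fun w w' => Disjoint (B w) (B w')) ∧
    ∀ w w', H.Adj w w' → ∃ u ∈ B w, ∃ x ∈ B w', G.Adj u x

/-- The Hadwiger number: largest `n` with `K_n` a minor of `G`. -/
noncomputable def hadwiger {V : Type u} [Fintype V] (G : SimpleGraph V) : ℕ :=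
  sSup {n : ℕ | IsMinorOf (⊤ : SimpleGraph (Fin n)) G}

/-- The grad `∇(G)`: maximum of `|E(H)|/|V(H)|` over minors `H` of `G`. -/
noncomputable def gradMax {V : Type u} [Fintype V] (G : SimpleGraph V) : ℝ :=
  sSup {x : ℝ | ∃ (W : Type) (_ : Finite W) (H : SimpleGraph W),
    IsMinorOf H G ∧ x = (H.edgeSet.ncard : ℝ) / (Nat.card W : ℝ)}

/-- The quotient of `G` by a family of balls. -/
def quotientGraph {V : Type u} (G : SimpleGraph V) {p : ℕ} (B : Fin p → Set V) :
    SimpleGraph (Fin p) where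
  Adj i j := i ≠ j ∧ ((B i ∩ B j).Nonempty ∨ ∃ u ∈ B i, ∃ x ∈ B j, G.Adj u x)
  symm := by
    constructor
    rintro i j ⟨hij, h⟩
    refine ⟨hij.symm, ?_⟩
    rcases h with h | ⟨u, hu, x, hx, huv⟩
    · exact Or.inl (by rwa [Set.inter_comm])
    · exact Or.inr ⟨x, hx, u, hu, huv.symm⟩
  loopless := ⟨fun i h => h.1 rfl⟩

/-- A family of balls of radius at most `r` and complexity at most `c`. -/
def IsBallFamily {V : Type u} (G : SimpleGraph V) (r c : ℕ) {p : ℕ}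
    (B : Fin p → Set V) : Prop :=
  (∀ i, (G.induce (B i)).Connected ∧
    ∃ x : B i, ∀ y : B i, (G.induce (B i)).dist x y ≤ r) ∧
  ∀ v : V, ({i | v ∈ B i} : Set (Fin p)).ncard ≤ c

/-- The grad `∇^c_r(G)` of `G` with rank `r` and complexity `c`. -/
noncomputable def gradCR {V : Type u} [Fintype V] (c r : ℕ) (G : SimpleGraph V) : ℝ :=
  sSup {x : ℝ | ∃ (p : ℕ) (B : Fin p → Set V), IsBallFamily G r c B ∧
    x = ((quotientGraph G B).edgeSet.ncard : ℝ) / (p : ℝ)}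

/-- The grad `∇_r(G)` of `G` with rank `r`. -/
noncomputable def gradR {V : Type u} [Fintype V] (r : ℕ) (G : SimpleGraph V) : ℝ :=
  gradCR 1 r G

def HasBoundedExpansion (C : GraphClass) : Prop :=
  ∃ f : ℕ → ℝ, ∀ (V : Type) [Fintype V], ∀ G : SimpleGraph V, C V G →
    ∀ r : ℕ, gradR r G ≤ f r

/-- The lexicographic product of two graphs. -/
def lexProd {V : Type u} {W : Type v} (G : SimpleGraph V) (H : SimpleGraph W) :
    SimpleGraph (V × W) where
  Adj a b := G.Adj a.1 b.1 ∨ (a.1 = b.1 ∧ H.Adj a.2 b.2)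
  symm := by
    constructor
    rintro a b (h | ⟨h1, h2⟩)
    · exact Or.inl h.symm
    · exact Or.inr ⟨h1.symm, h2.symm⟩
  loopless := by
    constructor
    rintro a (h | ⟨h1, h2⟩)
    · exact G.loopless.irrefl a.1 h
    · exact H.loopless.irrefl a.2 h2

/-- A loopless directed graph with at most one arc in each direction between two vertices. -/
structure Digr (V : Type u) where
  Adj : V → V → Prop
  irrefl : ∀ x, ¬ Adj x x

/-- The underlying simple graph of a digraph. -/
def Digr.toSimple {V : Type u} (D : Digr V) : SimpleGraph V where
  Adj x y := D.Adj x y ∨ D.Adj y x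
  symm := ⟨fun x y h => h.symm⟩
  loopless := ⟨fun x h => h.elim (D.irrefl x) (D.irrefl x)⟩

/-- Maximum indegree of a set of arcs (a binary relation). -/
noncomputable def inDegMax {V : Type u} [Fintype V] (R : V → V → Prop) : ℕ :=
  Finset.univ.sup fun y => (Finset.univ.filter fun x => R x y).card

def listArcs {V : Type u} (l : List V) : List (V × V) := l.zip l.tail

def internalVerts {V : Type u} (l : List V) : List V := l.tail.dropLast

/-- `l` is (the vertex list of) a directed path in `D`. -/
def IsDiPath {V : Type u} (D : Digr V) (l : List V) : Prop :=
  l ≠ [] ∧ l.Nodup ∧ l.Chain' D.Adj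

/-- `l` is a directed path in `D` from `x` to `z`. -/
def DiPathBetween {V : Type u} (D : Digr V) (l : List V) (x z : V) : Prop :=
  IsDiPath D l ∧ l.head? = some x ∧ l.getLast? = some z

/-- No internal vertex or arc of one path belongs to the other. -/
def SeparatedPair {V : Type u} (l1 l2 : List V) : Prop :=
  (∀ v ∈ internalVerts l1, v ∉ l2) ∧ (∀ v ∈ internalVerts l2, v ∉ l1) ∧
  ∀ e ∈ listArcs l1, e ∉ listArcs l2

/-- `y` is `(a,b)`-reachable from `x` in `D`. -/
def ABReachable {V : Type u} (D : Digr V) (a b : ℕ) (x y : V) : Prop :=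
  x ≠ y ∧ ∃ (z : V) (l1 l2 : List V),
    DiPathBetween D l1 x z ∧ DiPathBetween D l2 y z ∧
    l1.length ≤ a + 1 ∧ l2.length ≤ b + 1 ∧ SeparatedPair l1 l2

/-- `L` is an `(a,b)`-augmentation of `D`. -/
def IsAugmentation {V : Type u} (D : Digr V) (a b : ℕ) (L : V → V → Prop) : Prop :=
  ∀ x y, ABReachable D a b x y → L x y ∨ L y x

/-- `H` is a `1`-transitive fraternal augmentation of `D`. -/
def IsOneTFA {V : Type u} (D H : Digr V) : Prop :=
  (∀ x y, D.Adj x y → H.Adj x y) ∧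
  (∀ x y z, x ≠ y → D.Adj x z → D.Adj z y → H.Adj x y) ∧
  (∀ x y z, x ≠ y → D.Adj x z → D.Adj y z → H.Adj x y ∨ H.Adj y x)

/-- `Gs` (indexed from `1`) is a transitive fraternal augmentation of `D`. -/
def IsTFASeq {V : Type u} (D : Digr V) (Gs : ℕ → Digr V) : Prop :=
  Gs 1 = D ∧ ∀ i, 1 ≤ i → IsOneTFA (Gs i) (Gs (i + 1))

/-- `D` is an orientation of the graph `G`. -/
def IsOrientationOf {V : Type u} (D : Digr V) (G : SimpleGraph V) : Prop :=
  (∀ x y, D.Adj x y → ¬ D.Adj y x) ∧ D.toSimple = G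

/-- An acyclically oriented clique of size `p` in a digraph. -/
def AcyclicOrientedClique {V : Type u} (H : Digr V) (S : Set V) (p : ℕ) : Prop :=
  S.ncard = p ∧ (∀ x ∈ S, ∀ y ∈ S, x ≠ y → H.Adj x y ∨ H.Adj y x) ∧
  ∀ x : V, ¬ Relation.TransGen (fun a b => a ∈ S ∧ b ∈ S ∧ H.Adj a b) x x

section Aux

variable {V₀ : Type} {α : Type} (G₀ : SimpleGraph V₀) (c' : V₀ → α)

def grel (S : Finset V₀) (a b : V₀) : Prop := a ∈ S ∧ b ∈ S ∧ G₀.Adj a b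

lemma grel_symm (S : Finset V₀) : Symmetric (grel G₀ S) :=
  fun _ _ h => ⟨h.2.1, h.1, h.2.2.symm⟩

noncomputable def gcomp (S : Finset V₀) (v : V₀) : Finset V₀ :=
  S.filter (fun u => Relation.ReflTransGen (grel G₀ S) v u)

lemma gcomp_subset (S : Finset V₀) (v : V₀) : gcomp G₀ S v ⊆ S :=
  Finset.filter_subset _ _

lemma mem_gcomp_self {S : Finset V₀} {v : V₀} (hv : v ∈ S) : v ∈ gcomp G₀ S v :=
  Finset.mem_filter.2 ⟨hv, Relation.ReflTransGen.refl⟩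

lemma gcomp_eq {S : Finset V₀} {v u : V₀} (hu : u ∈ gcomp G₀ S v) :
    gcomp G₀ S u = gcomp G₀ S v := by
  rcases Finset.mem_filter.1 hu with ⟨huS, hr⟩
  ext w
  simp only [gcomp, Finset.mem_filter, and_congr_right_iff]
  intro _
  constructor
  · exact fun h => hr.trans h
  · exact fun h => (haveI : Std.Symm (grel G₀ S) := ⟨fun a b h => grel_symm G₀ S h⟩; Std.Symm.symm (r := Relation.ReflTransGen (grel G₀ S)) _ _ hr).trans h

lemma adj_mem_gcomp {S : Finset V₀} {u v : V₀} (hu : u ∈ S) (hv : v ∈ S)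
    (h : G₀.Adj u v) : u ∈ gcomp G₀ S v :=
  Finset.mem_filter.2 ⟨hu, Relation.ReflTransGen.single ⟨hv, hu, h.symm⟩⟩

lemma reach_in_comp {S : Finset V₀} {v : V₀} (hv : v ∈ S) :
    ∀ b, Relation.ReflTransGen (grel G₀ S) v b →
      ∃ hb : b ∈ gcomp G₀ S v,
        (G₀.induce (↑(gcomp G₀ S v) : Set V₀)).Reachable
          ⟨v, mem_gcomp_self G₀ hv⟩ ⟨b, hb⟩ := by
  intro b h
  induction h with
  | refl => exact ⟨mem_gcomp_self G₀ hv, SimpleGraph.Reachable.refl _⟩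
  | @tail c b hvc hcb ih =>
    rcases ih with ⟨hc, hreach⟩
    have hb : b ∈ gcomp G₀ S v := Finset.mem_filter.2 ⟨hcb.2.1, hvc.tail hcb⟩
    refine ⟨hb, hreach.trans ?_⟩
    exact SimpleGraph.Adj.reachable (by exact hcb.2.2)

lemma gcomp_connected {S : Finset V₀} {v : V₀} (hv : v ∈ S) :
    (G₀.induce (↑(gcomp G₀ S v) : Set V₀)).Connected := by
  haveI : Nonempty (↑(gcomp G₀ S v) : Set V₀) := ⟨⟨v, mem_gcomp_self G₀ hv⟩⟩
  refine ⟨?_⟩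
  rintro ⟨a, ha⟩ ⟨b, hb⟩
  obtain ⟨_, hra⟩ := reach_in_comp G₀ hv a (Finset.mem_filter.1 ha).2
  obtain ⟨_, hrb⟩ := reach_in_comp G₀ hv b (Finset.mem_filter.1 hb).2
  exact hra.symm.trans hrb

noncomputable def groot (C : Finset V₀) (v : V₀) : V₀ :=
  if h : ∃ x ∈ C, ∀ y ∈ C, c' y = c' x → y = x then h.choose else v

lemma groot_mem {C : Finset V₀} {v : V₀} (hv : v ∈ C) : groot c' C v ∈ C := by
  unfold groot
  split
  · next h => exact h.choose_spec.1
  · exact hv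

lemma groot_indep {C : Finset V₀} (h : ∃ x ∈ C, ∀ y ∈ C, c' y = c' x → y = x)
    (u v : V₀) : groot c' C u = groot c' C v := by
  unfold groot; rw [dif_pos h, dif_pos h]

lemma groot_spec' {C : Finset V₀} (h : ∃ x ∈ C, ∀ y ∈ C, c' y = c' x → y = x) (v : V₀) :
    ∀ y ∈ C, c' y = c' (groot c' C v) → y = groot c' C v := by
  unfold groot; rw [dif_pos h]; exact h.choose_spec.2

noncomputable def ganc (S : Finset V₀) (v : V₀) : Finset V₀ :=
  if hv : v ∈ S then
    insert (groot c' (gcomp G₀ S v) v)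
      (ganc ((gcomp G₀ S v).erase (groot c' (gcomp G₀ S v) v)) v)
  else ∅
termination_by S.card
decreasing_by
  exact lt_of_lt_of_le (Finset.card_erase_lt_of_mem (groot_mem c' (mem_gcomp_self G₀ hv)))
    (Finset.card_le_card (gcomp_subset G₀ S v))

lemma ganc_of_mem {S : Finset V₀} {v : V₀} (hv : v ∈ S) :
    ganc G₀ c' S v = insert (groot c' (gcomp G₀ S v) v)
      (ganc G₀ c' ((gcomp G₀ S v).erase (groot c' (gcomp G₀ S v) v)) v) := by
  rw [ganc, dif_pos hv]

lemma ganc_of_not_mem {S : Finset V₀} {v : V₀} (hv : v ∉ S) :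
    ganc G₀ c' S v = ∅ := by
  rw [ganc, dif_neg hv]

end Aux


section WithH

variable {V₀ : Type} {α : Type} (G₀ : SimpleGraph V₀) (c' : V₀ → α)

lemma erase_ssub {S : Finset V₀} {v : V₀} (hv : v ∈ S) :
    (gcomp G₀ S v).erase (groot c' (gcomp G₀ S v) v) ⊂ S :=
  lt_of_lt_of_le (Finset.erase_ssubset (groot_mem c' (mem_gcomp_self G₀ hv)))
    (gcomp_subset G₀ S v)

variable (H : ∀ C : Finset V₀, C.Nonempty → (G₀.induce (↑C : Set V₀)).Connected →
  ∃ x ∈ C, ∀ y ∈ C, c' y = c' x → y = x)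

include H

lemma good {S : Finset V₀} {v : V₀} (hv : v ∈ S) :
    ∃ x ∈ gcomp G₀ S v, ∀ y ∈ gcomp G₀ S v, c' y = c' x → y = x :=
  H _ ⟨v, mem_gcomp_self G₀ hv⟩ (gcomp_connected G₀ hv)

lemma ganc_unfold {S : Finset V₀} {v u : V₀} (hv : v ∈ S) (hu : u ∈ gcomp G₀ S v) :
    ganc G₀ c' S u = insert (groot c' (gcomp G₀ S v) v)
      (ganc G₀ c' ((gcomp G₀ S v).erase (groot c' (gcomp G₀ S v) v)) u) := by
  have huS : u ∈ S := gcomp_subset G₀ S v hu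
  rw [ganc_of_mem G₀ c' huS, gcomp_eq G₀ hu, groot_indep c' (good G₀ c' H hv) u v]

omit H in
lemma ganc_root_not_mem {S : Finset V₀} (v : V₀) :
    groot c' (gcomp G₀ S v) v ∉
      (gcomp G₀ S v).erase (groot c' (gcomp G₀ S v) v) :=
  Finset.notMem_erase _ _

lemma ganc_basic : ∀ S : Finset V₀, ∀ v, v ∈ S →
    v ∈ ganc G₀ c' S v ∧ ganc G₀ c' S v ⊆ gcomp G₀ S v := by
  intro S
  induction S using Finset.strongInductionOn with
  | _ S ih =>
    intro v hv
    have hxC : groot c' (gcomp G₀ S v) v ∈ gcomp G₀ S v :=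
      groot_mem c' (mem_gcomp_self G₀ hv)
    have hss : (gcomp G₀ S v).erase (groot c' (gcomp G₀ S v) v) ⊂ S := erase_ssub G₀ c' hv
    rw [ganc_of_mem G₀ c' hv]
    constructor
    · by_cases hvx : v = groot c' (gcomp G₀ S v) v
      · exact Finset.mem_insert.2 (Or.inl hvx)
      · have hv' : v ∈ (gcomp G₀ S v).erase (groot c' (gcomp G₀ S v) v) :=
          Finset.mem_erase.2 ⟨hvx, mem_gcomp_self G₀ hv⟩
        exact Finset.mem_insert_of_mem ((ih _ hss v hv').1)
    · intro y hy
      rcases Finset.mem_insert.1 hy with rfl | hy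
      · exact hxC
      · by_cases hv' : v ∈ (gcomp G₀ S v).erase (groot c' (gcomp G₀ S v) v)
        · exact Finset.erase_subset _ _ (gcomp_subset G₀ _ _ ((ih _ hss v hv').2 hy))
        · rw [ganc_of_not_mem G₀ c' hv'] at hy
          exact absurd hy (Finset.notMem_empty y)

lemma ganc_trans : ∀ S : Finset V₀, ∀ v u, v ∈ S → u ∈ ganc G₀ c' S v →
    ganc G₀ c' S u ⊆ ganc G₀ c' S v := by
  intro S
  induction S using Finset.strongInductionOn with
  | _ S ih =>
    intro v u hv hu
    have hxC : groot c' (gcomp G₀ S v) v ∈ gcomp G₀ S v :=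
      groot_mem c' (mem_gcomp_self G₀ hv)
    have hss : (gcomp G₀ S v).erase (groot c' (gcomp G₀ S v) v) ⊂ S := erase_ssub G₀ c' hv
    rw [ganc_of_mem G₀ c' hv] at hu ⊢
    rcases Finset.mem_insert.1 hu with rfl | hu'
    · rw [ganc_unfold G₀ c' H hv hxC,
        ganc_of_not_mem G₀ c' (ganc_root_not_mem G₀ c' v)]
      intro y hy
      rcases Finset.mem_insert.1 hy with rfl | hy
      · exact Finset.mem_insert_self _ _
      · exact absurd hy (Finset.notMem_empty y)
    · by_cases hvx : v = groot c' (gcomp G₀ S v) v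
      · have hnm : v ∉ (gcomp G₀ S v).erase (groot c' (gcomp G₀ S v) v) :=
          fun hm => (Finset.mem_erase.1 hm).1 hvx
        rw [ganc_of_not_mem G₀ c' hnm] at hu'
        exact absurd hu' (Finset.notMem_empty u)
      · have hv' : v ∈ (gcomp G₀ S v).erase (groot c' (gcomp G₀ S v) v) :=
          Finset.mem_erase.2 ⟨hvx, mem_gcomp_self G₀ hv⟩
        have huC' : u ∈ (gcomp G₀ S v).erase (groot c' (gcomp G₀ S v) v) :=
          gcomp_subset G₀ _ _ ((ganc_basic G₀ c' H _ v hv').2 hu')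
        have huC : u ∈ gcomp G₀ S v := Finset.erase_subset _ _ huC'
        rw [ganc_unfold G₀ c' H hv huC]
        exact Finset.insert_subset_insert _ (ih _ hss v u hv' hu')

lemma ganc_antisymm : ∀ S : Finset V₀, ∀ v u, v ∈ S → u ∈ ganc G₀ c' S v →
    v ∈ ganc G₀ c' S u → u = v := by
  intro S
  induction S using Finset.strongInductionOn with
  | _ S ih =>
    intro v u hv hu hvu
    have hxC : groot c' (gcomp G₀ S v) v ∈ gcomp G₀ S v :=
      groot_mem c' (mem_gcomp_self G₀ hv)
    have hss : (gcomp G₀ S v).erase (groot c' (gcomp G₀ S v) v) ⊂ S := erase_ssub G₀ c' hv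
    rw [ganc_of_mem G₀ c' hv] at hu
    rcases Finset.mem_insert.1 hu with rfl | hu'
    · rw [ganc_unfold G₀ c' H hv hxC,
        ganc_of_not_mem G₀ c' (ganc_root_not_mem G₀ c' v)] at hvu
      rcases Finset.mem_insert.1 hvu with hveq | h
      · exact hveq.symm
      · exact absurd h (Finset.notMem_empty v)
    · by_cases hvx : v = groot c' (gcomp G₀ S v) v
      · have hnm : v ∉ (gcomp G₀ S v).erase (groot c' (gcomp G₀ S v) v) :=
          fun hm => (Finset.mem_erase.1 hm).1 hvx
        rw [ganc_of_not_mem G₀ c' hnm] at hu'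
        exact absurd hu' (Finset.notMem_empty u)
      · have hv' : v ∈ (gcomp G₀ S v).erase (groot c' (gcomp G₀ S v) v) :=
          Finset.mem_erase.2 ⟨hvx, mem_gcomp_self G₀ hv⟩
        have huC' : u ∈ (gcomp G₀ S v).erase (groot c' (gcomp G₀ S v) v) :=
          gcomp_subset G₀ _ _ ((ganc_basic G₀ c' H _ v hv').2 hu')
        have huC : u ∈ gcomp G₀ S v := Finset.erase_subset _ _ huC'
        rw [ganc_unfold G₀ c' H hv huC] at hvu
        rcases Finset.mem_insert.1 hvu with hveq | hvu'
        · exact absurd hveq hvx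
        · exact ih _ hss v u hv' hu' hvu'

lemma ganc_chain : ∀ S : Finset V₀, ∀ w u v, w ∈ S → u ∈ ganc G₀ c' S w →
    v ∈ ganc G₀ c' S w → u ∈ ganc G₀ c' S v ∨ v ∈ ganc G₀ c' S u := by
  intro S
  induction S using Finset.strongInductionOn with
  | _ S ih =>
    intro w u v hw hu hv
    have hss : (gcomp G₀ S w).erase (groot c' (gcomp G₀ S w) w) ⊂ S := erase_ssub G₀ c' hw
    have huC : u ∈ gcomp G₀ S w := (ganc_basic G₀ c' H S w hw).2 hu
    have hvC : v ∈ gcomp G₀ S w := (ganc_basic G₀ c' H S w hw).2 hv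
    rw [ganc_of_mem G₀ c' hw] at hu hv
    rcases Finset.mem_insert.1 hu with hueq | hu'
    · left
      rw [ganc_unfold G₀ c' H hw hvC]
      exact Finset.mem_insert.2 (Or.inl hueq)
    · rcases Finset.mem_insert.1 hv with hveq | hv'
      · right
        rw [ganc_unfold G₀ c' H hw huC]
        exact Finset.mem_insert.2 (Or.inl hveq)
      · by_cases hwx : w = groot c' (gcomp G₀ S w) w
        · have hnm : w ∉ (gcomp G₀ S w).erase (groot c' (gcomp G₀ S w) w) :=
            fun hm => (Finset.mem_erase.1 hm).1 hwx
          rw [ganc_of_not_mem G₀ c' hnm] at hu'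
          exact absurd hu' (Finset.notMem_empty u)
        · have hw' : w ∈ (gcomp G₀ S w).erase (groot c' (gcomp G₀ S w) w) :=
            Finset.mem_erase.2 ⟨hwx, mem_gcomp_self G₀ hw⟩
          rcases ih _ hss w u v hw' hu' hv' with h | h
          · left
            rw [ganc_unfold G₀ c' H hw hvC]
            exact Finset.mem_insert_of_mem h
          · right
            rw [ganc_unfold G₀ c' H hw huC]
            exact Finset.mem_insert_of_mem h

lemma ganc_adj : ∀ S : Finset V₀, ∀ u v, u ∈ S → v ∈ S → G₀.Adj u v →
    u ∈ ganc G₀ c' S v ∨ v ∈ ganc G₀ c' S u := by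
  intro S
  induction S using Finset.strongInductionOn with
  | _ S ih =>
    intro u v hu hv hadj
    have hss : (gcomp G₀ S v).erase (groot c' (gcomp G₀ S v) v) ⊂ S := erase_ssub G₀ c' hv
    have huC : u ∈ gcomp G₀ S v := adj_mem_gcomp G₀ hu hv hadj
    by_cases hux : u = groot c' (gcomp G₀ S v) v
    · left
      rw [ganc_of_mem G₀ c' hv]
      exact Finset.mem_insert.2 (Or.inl hux)
    · by_cases hvx : v = groot c' (gcomp G₀ S v) v
      · right
        rw [ganc_unfold G₀ c' H hv huC]
        exact Finset.mem_insert.2 (Or.inl hvx)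
      · have hu' : u ∈ (gcomp G₀ S v).erase (groot c' (gcomp G₀ S v) v) :=
          Finset.mem_erase.2 ⟨hux, huC⟩
        have hv' : v ∈ (gcomp G₀ S v).erase (groot c' (gcomp G₀ S v) v) :=
          Finset.mem_erase.2 ⟨hvx, mem_gcomp_self G₀ hv⟩
        rcases ih _ hss u v hu' hv' hadj with h | h
        · left
          rw [ganc_of_mem G₀ c' hv]
          exact Finset.mem_insert_of_mem h
        · right
          rw [ganc_unfold G₀ c' H hv huC]
          exact Finset.mem_insert_of_mem h

lemma ganc_card : ∀ S : Finset V₀, ∀ v, v ∈ S →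
    (ganc G₀ c' S v).card ≤ ((gcomp G₀ S v).image c').card := by
  intro S
  induction S using Finset.strongInductionOn with
  | _ S ih =>
    intro v hv
    have hxC : groot c' (gcomp G₀ S v) v ∈ gcomp G₀ S v :=
      groot_mem c' (mem_gcomp_self G₀ hv)
    have hss : (gcomp G₀ S v).erase (groot c' (gcomp G₀ S v) v) ⊂ S := erase_ssub G₀ c' hv
    have himg : c' (groot c' (gcomp G₀ S v) v) ∈ (gcomp G₀ S v).image c' :=
      Finset.mem_image_of_mem c' hxC
    have h1 : 1 ≤ ((gcomp G₀ S v).image c').card := Finset.card_pos.2 ⟨_, himg⟩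
    rw [ganc_of_mem G₀ c' hv]
    refine (Finset.card_insert_le _ _).trans ?_
    by_cases hvx : v = groot c' (gcomp G₀ S v) v
    · have hnm : v ∉ (gcomp G₀ S v).erase (groot c' (gcomp G₀ S v) v) :=
        fun hm => (Finset.mem_erase.1 hm).1 hvx
      rw [ganc_of_not_mem G₀ c' hnm]
      simpa using h1
    · have hv' : v ∈ (gcomp G₀ S v).erase (groot c' (gcomp G₀ S v) v) :=
        Finset.mem_erase.2 ⟨hvx, mem_gcomp_self G₀ hv⟩
      have hsub : (gcomp G₀ ((gcomp G₀ S v).erase (groot c' (gcomp G₀ S v) v)) v).image c' ⊆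
          ((gcomp G₀ S v).image c').erase (c' (groot c' (gcomp G₀ S v) v)) := by
        intro a ha
        rcases Finset.mem_image.1 ha with ⟨y, hy, rfl⟩
        have hyC' : y ∈ (gcomp G₀ S v).erase (groot c' (gcomp G₀ S v) v) :=
          gcomp_subset G₀ _ _ hy
        have hyC : y ∈ gcomp G₀ S v := Finset.erase_subset _ _ hyC'
        refine Finset.mem_erase.2 ⟨?_, Finset.mem_image_of_mem c' hyC⟩
        intro hcy
        exact (Finset.mem_erase.1 hyC').1 (groot_spec' c' (good G₀ c' H hv) v y hyC hcy)
      have h2 := (ih _ hss v hv').trans (Finset.card_le_card hsub)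
      rw [Finset.card_erase_of_mem himg] at h2
      omega

end WithH

lemma key_td {V₀ α : Type} [Fintype V₀] (G₀ : SimpleGraph V₀) (c' : V₀ → α)
    (H : ∀ C : Finset V₀, C.Nonempty → (G₀.induce (↑C : Set V₀)).Connected →
      ∃ x ∈ C, ∀ y ∈ C, c' y = c' x → y = x) :
    treeDepth G₀ ≤ (Finset.univ.image c').card := by
  classical
  set F : RootedForest V₀ :=
    { le := fun u v => u ∈ ganc G₀ c' Finset.univ v
      le_refl := fun v => (ganc_basic G₀ c' H Finset.univ v (Finset.mem_univ v)).1
      le_antisymm := fun x y h1 h2 =>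
        ganc_antisymm G₀ c' H Finset.univ y x (Finset.mem_univ y) h1 h2
      le_trans := fun x y z h1 h2 =>
        ganc_trans G₀ c' H Finset.univ z y (Finset.mem_univ z) h2 h1
      ancestors_chain := fun x y z h1 h2 =>
        ganc_chain G₀ c' H Finset.univ z x y (Finset.mem_univ z) h1 h2 } with hF
  have hle : G₀ ≤ F.clos := by
    intro a b hab
    exact (⟨hab.ne, ganc_adj G₀ c' H Finset.univ a b (Finset.mem_univ a)
      (Finset.mem_univ b) hab⟩ : a ≠ b ∧ (F.le a b ∨ F.le b a))
  have hht : F.height ≤ (Finset.univ.image c').card := by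
    refine Finset.sup_le fun v _ => ?_
    refine (Finset.card_le_card fun y hy => ?_).trans
      ((ganc_card G₀ c' H Finset.univ v (Finset.mem_univ v)).trans
        (Finset.card_le_card (Finset.image_subset_image (gcomp_subset G₀ _ _))))
    simp only [Finset.mem_filter] at hy
    exact hy.2
  exact Nat.sInf_le ⟨F, hle, hht⟩

lemma conn_transfer {V₀ V : Type} (G₀ : SimpleGraph V₀) (G : SimpleGraph V) (f : V₀ → V)
    (hhom : ∀ u v, G₀.Adj u v → G.Adj (f u) (f v)) (T : Set V₀)
    (h : (G₀.induce T).Connected) : (G.induce (f '' T)).Connected := by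
  let φ : G₀.induce T →g G.induce (f '' T) :=
    { toFun := fun x => ⟨f x.1, x.1, x.2, rfl⟩
      map_rel' := fun {a b} hab => hhom _ _ hab }
  refine h.map φ ?_
  rintro ⟨w, v, hv, rfl⟩
  exact ⟨⟨v, hv⟩, rfl⟩


/-- Any subgraph of `G` isomorphic to `G₀` gets at least `td G₀` colors in a
`q`-centered coloring of `G`, `q ≥ td G₀`. -/
theorem stmt1 {V V₀ α : Type} [Fintype V] [Fintype V₀]
    (G : SimpleGraph V) (G₀ : SimpleGraph V₀) (q : ℕ) (hq : treeDepth G₀ ≤ q)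
    (c : V → α) (hc : IsCenteredColoring q G c)
    (f : V₀ → V) (hf : Function.Injective f)
    (hhom : ∀ u v, G₀.Adj u v → G.Adj (f u) (f v)) :
    treeDepth G₀ ≤ (c '' Set.range f).ncard := by
  classical
  by_cases hbig : q ≤ (c '' Set.range f).ncard
  · exact hq.trans hbig
  · push_neg at hbig
    have hfin : (c '' Set.range f).Finite := ((Set.finite_range f).image c)
    have H : ∀ T : Finset V₀, T.Nonempty → (G₀.induce (↑T : Set V₀)).Connected →
        ∃ x ∈ T, ∀ y ∈ T, (c ∘ f) y = (c ∘ f) x → y = x := by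
      intro T hT hconn
      have hconn' : (G.induce (f '' (↑T : Set V₀))).Connected :=
        conn_transfer G₀ G f hhom _ hconn
      rcases hc (f '' (↑T : Set V₀)) hconn' with ⟨x, hx, hux⟩ | hge
      · rcases hx with ⟨x₀, hx₀, rfl⟩
        refine ⟨x₀, hx₀, fun y hy hcy => ?_⟩
        exact hf (hux (f y) ⟨y, hy, rfl⟩ hcy)
      · exfalso
        have hsub : c '' (f '' (↑T : Set V₀)) ⊆ c '' Set.range f :=
          Set.image_mono (Set.image_subset_range f ↑T |>.trans subset_rfl)
        have := (Set.ncard_le_ncard hsub hfin)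
        omega
    have hkey := key_td G₀ (c ∘ f) H
    have heq : (c '' Set.range f) = ↑(Finset.univ.image (c ∘ f)) := by
      rw [Finset.coe_image, Finset.coe_univ, Set.image_univ, Set.range_comp]
    rw [heq, Set.ncard_coe_finset]
    exact hkey
end

section
/- Let p be an integer, let G be a graph, and let c be a p-centered coloring of G. Then for every i < p, the subgraph of G induced by the union of any i color classes of c has tree-depth at most i. -/
open scoped Classical

universe u v

open SimpleGraph in
private lemma induce_induce_connected' {V : Type} (G : SimpleGraph V) (A : Set V) (S : Set ↥A)
    (h : ((G.induce A).induce S).Connected) : (G.induce (Subtype.val '' S)).Connected := by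
  let f : (G.induce A).induce S →g G.induce (Subtype.val '' S) :=
    ⟨fun x => ⟨x.1.1, ⟨x.1, x.2, rfl⟩⟩, fun hab => hab⟩
  have hsurj : Function.Surjective f := by
    rintro ⟨v, ⟨w, hwS, rfl⟩⟩
    exact ⟨⟨w, hwS⟩, Subtype.ext rfl⟩
  exact h.map f hsurj

open SimpleGraph in
private lemma comp_supp_connected' {W : Type} (H : SimpleGraph W) (K : H.ConnectedComponent) :
    (H.induce K.supp).Connected := by
  obtain ⟨v, rfl⟩ := K.exists_rep
  rw [SimpleGraph.connected_iff_exists_forall_reachable]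
  have hv : v ∈ (H.connectedComponentMk v).supp := by
    simp [SimpleGraph.ConnectedComponent.mem_supp_iff]
  refine ⟨⟨v, hv⟩, ?_⟩
  rintro ⟨w, hw⟩
  change H.connectedComponentMk w = H.connectedComponentMk v at hw
  have hr : H.Reachable v w := (SimpleGraph.ConnectedComponent.eq.mp hw).symm
  obtain ⟨p⟩ := hr
  have hsub : {x | x ∈ p.support} ⊆ (H.connectedComponentMk v).supp := by
    intro x hx
    rw [SimpleGraph.ConnectedComponent.mem_supp_iff]
    exact (SimpleGraph.ConnectedComponent.eq.mpr ⟨p.takeUntil x hx⟩).symm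
  have hconn := p.connected_induce_support
  have h1 : Reachable (H.induce {x | x ∈ p.support}) ⟨v, p.start_mem_support⟩ ⟨w, p.end_mem_support⟩ :=
    hconn ⟨v, p.start_mem_support⟩ ⟨w, p.end_mem_support⟩
  have := h1.map (SimpleGraph.induceHomOfLE H hsub).toHom
  exact this

private lemma centered_key {α : Type} : ∀ (n : ℕ) (W : Type) [Fintype W] (H : SimpleGraph W)
    (c : W → α),
    (∀ S : Set W, (H.induce S).Connected →
      (c '' S).ncard ≤ n ∧ ∃ x ∈ S, ∀ y ∈ S, c y = c x → y = x) →
    ∃ F : RootedForest W, H ≤ F.clos ∧ F.height ≤ n ∧ ∀ u v, F.le u v → H.Reachable u v := by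
  intro n
  induction n with
  | zero =>
    intro W _ H c hyp
    have hW : IsEmpty W := by
      by_contra h
      rw [not_isEmpty_iff] at h
      obtain ⟨w⟩ := h
      have hconn : (H.induce {w}).Connected := by
        rw [SimpleGraph.connected_iff_exists_forall_reachable]
        refine ⟨⟨w, rfl⟩, ?_⟩
        rintro ⟨x, hx⟩
        cases hx
        exact SimpleGraph.Reachable.refl _
      have h1 := (hyp {w} hconn).1
      simp [Set.ncard_singleton] at h1
    refine ⟨⟨Eq, fun x => rfl, fun x y h _ => h, fun x y z h h' => h.trans h',
      fun x y z h h' => Or.inl (h.trans h'.symm)⟩, ?_, ?_, ?_⟩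
    · intro a b hab
      exact isEmptyElim a
    · simp [RootedForest.height, Finset.univ_eq_empty]
    · intro u v _
      exact isEmptyElim u
  | succ n ih =>
    intro W _ H c hyp
    have hxex : ∀ K : H.ConnectedComponent, ∃ x ∈ K.supp, ∀ y ∈ K.supp, c y = c x → y = x :=
      fun K => (hyp K.supp (comp_supp_connected' H K)).2
    choose x hx1 hx2 using hxex
    set root : W → W := fun w => x (H.connectedComponentMk w) with hroot
    have hrootmk : ∀ w, H.connectedComponentMk (root w) = H.connectedComponentMk w := by
      intro w
      have := hx1 (H.connectedComponentMk w)
      rwa [SimpleGraph.ConnectedComponent.mem_supp_iff] at this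
    have hrootreach : ∀ w, H.Reachable (root w) w :=
      fun w => SimpleGraph.ConnectedComponent.eq.mp (hrootmk w)
    have hrooteq : ∀ u w, H.Reachable u w → root u = root w := by
      intro u w h
      simp only [hroot]
      rw [SimpleGraph.ConnectedComponent.sound h]
    have hrootroot : ∀ w, root (root w) = root w := by
      intro w
      simp only [hroot]
      rw [hrootmk w]
    set W' : Set W := {w | w ≠ root w} with hW'
    set H' : SimpleGraph ↥W' := H.induce W' with hH'
    -- the hom from H' into H
    have hreach' : ∀ a b : ↥W', H'.Reachable a b → H.Reachable a.1 b.1 := by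
      intro a b h
      have := h.map (⟨Subtype.val, fun hab => hab⟩ : H' →g H)
      exact this
    have hyp' : ∀ S : Set ↥W', (H'.induce S).Connected →
        ((c ∘ Subtype.val) '' S).ncard ≤ n ∧
          ∃ x ∈ S, ∀ y ∈ S, (c ∘ Subtype.val) y = (c ∘ Subtype.val) x → y = x := by
      intro S hS
      set T : Set W := Subtype.val '' S with hT
      have hTconn : (H.induce T).Connected := induce_induce_connected' H W' S hS
      have himg : (c ∘ Subtype.val) '' S = c '' T := by
        rw [hT, Set.image_comp]
      obtain ⟨⟨t₀, ht₀⟩⟩ := hTconn.nonempty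
      have hTreach : ∀ t ∈ T, H.Reachable t₀ t := by
        intro t ht
        have := hTconn ⟨t₀, ht₀⟩ ⟨t, ht⟩
        have := this.map (⟨Subtype.val, fun hab => hab⟩ : H.induce T →g H)
        exact this
      set K : H.ConnectedComponent := H.connectedComponentMk t₀ with hK
      have hTsupp : T ⊆ K.supp := by
        intro t ht
        rw [SimpleGraph.ConnectedComponent.mem_supp_iff, hK]
        exact (SimpleGraph.ConnectedComponent.eq.mpr (hTreach t ht)).symm
      have hxKnot : c (x K) ∉ c '' T := by
        rintro ⟨t, ht, hct⟩
        have heq : t = x K := hx2 K t (hTsupp ht) hct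
        obtain ⟨⟨t', ht'⟩, htS, rfl⟩ := ht
        apply ht'
        have : H.connectedComponentMk t' = K := by
          rw [← SimpleGraph.ConnectedComponent.mem_supp_iff]
          exact hTsupp ⟨⟨t', ht'⟩, htS, rfl⟩
        rw [hroot]
        simp only
        rw [this, ← heq]
      have hsubdiff : c '' T ⊆ (c '' K.supp) \ {c (x K)} := by
        rintro _ ⟨t, ht, rfl⟩
        refine ⟨⟨t, hTsupp ht, rfl⟩, ?_⟩
        intro hmem
        rw [Set.mem_singleton_iff] at hmem
        exact hxKnot (hmem ▸ ⟨t, ht, rfl⟩)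
      have hKcard : (c '' K.supp).ncard ≤ n + 1 :=
        (hyp K.supp (comp_supp_connected' H K)).1
      have hxKmem : c (x K) ∈ c '' K.supp := ⟨x K, hx1 K, rfl⟩
      have hdiff : ((c '' K.supp) \ {c (x K)}).ncard = (c '' K.supp).ncard - 1 :=
        Set.ncard_diff_singleton_of_mem hxKmem
      have hcard : (c '' T).ncard ≤ n := by
        have h1 := Set.ncard_le_ncard hsubdiff (Set.toFinite _)
        omega
      constructor
      · rw [himg]; exact hcard
      · obtain ⟨x₀, hx₀T, hx₀u⟩ := (hyp T hTconn).2
        obtain ⟨x₀', hx₀'S, rfl⟩ := hx₀T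
        exact ⟨x₀', hx₀'S, fun y hy hcy =>
          Subtype.ext (hx₀u y.1 ⟨y, hy, rfl⟩ hcy)⟩
    obtain ⟨F', hF'le, hF'h, hF'r⟩ := ih ↥W' H' (c ∘ Subtype.val) hyp'
    set le : W → W → Prop := fun u v => u = v ∨ u = root v ∨
      ∃ (hu : u ∈ W') (hv : v ∈ W'), F'.le ⟨u, hu⟩ ⟨v, hv⟩ with hle
    have hreachle : ∀ u v, le u v → H.Reachable u v := by
      intro u v h
      rcases h with rfl | rfl | ⟨hu, hv, h⟩
      · exact SimpleGraph.Reachable.refl _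
      · exact hrootreach v
      · exact hreach' _ _ (hF'r _ _ h)
    have hF'root : ∀ (a b : ↥W'), F'.le a b → root a.1 = root b.1 :=
      fun a b h => hrooteq _ _ (hreach' a b (hF'r a b h))
    have hle_refl : ∀ u, le u u := fun u => Or.inl rfl
    have hle_antisymm : ∀ u v, le u v → le v u → u = v := by
      intro u v huv hvu
      rcases huv with rfl | rfl | ⟨hu, hv, huv⟩
      · rfl
      · rcases hvu with h | h | ⟨hv, hr, hvu⟩
        · exact h.symm
        · -- root v = root (root v), v = root (root v)
          rw [hrootroot v] at h
          exact h.symm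
        · -- root v ∈ W' : root v ≠ root (root v) = root v, contra
          exact absurd (hrootroot v).symm hr
      · rcases hvu with rfl | h | ⟨hv', hu', hvu⟩
        · rfl
        · -- h : v = root u; then v = root v, contradicting hv
          exfalso
          apply hv
          rw [h, hrootroot]
        · exact congrArg Subtype.val (F'.le_antisymm _ _ huv hvu)
    have hle_trans : ∀ u v w, le u v → le v w → le u w := by
      intro u v w huv hvw
      rcases huv with rfl | rfl | ⟨hu, hv, huv⟩
      · exact hvw
      · rcases hvw with rfl | rfl | ⟨hv, hw, hvw⟩
        · exact Or.inr (Or.inl rfl)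
        · exact Or.inr (Or.inl (hrootroot w))
        · exact Or.inr (Or.inl ((hF'root ⟨v, hv⟩ ⟨w, hw⟩ hvw)))
      · rcases hvw with rfl | h | ⟨hv', hw, hvw⟩
        · exact Or.inr (Or.inr ⟨hu, hv, huv⟩)
        · -- v ∈ W' but v = root w, so root v = root w = v, contra
          exfalso
          apply hv
          rw [h, hrootroot w]
        · exact Or.inr (Or.inr ⟨hu, hw, F'.le_trans _ _ _ huv hvw⟩)
    have hle_chain : ∀ u v w, le u w → le v w → le u v ∨ le v u := by
      intro u v w huw hvw
      rcases huw with rfl | rfl | ⟨hu, hw, huw⟩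
      · exact Or.inr hvw
      · rcases hvw with rfl | rfl | ⟨hv, hw, hvw⟩
        · exact Or.inl (Or.inr (Or.inl rfl))
        · exact Or.inl (Or.inl rfl)
        · exact Or.inl (Or.inr (Or.inl (hF'root ⟨v, hv⟩ ⟨w, hw⟩ hvw).symm))
      · rcases hvw with rfl | h | ⟨hv, hw', hvw⟩
        · exact Or.inl (Or.inr (Or.inr ⟨hu, hw, huw⟩))
        · exact Or.inr (Or.inr (Or.inl ((h.trans (hF'root ⟨u, hu⟩ ⟨w, hw⟩ huw).symm))))
        · rcases F'.ancestors_chain _ _ _ huw hvw with h | h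
          · exact Or.inl (Or.inr (Or.inr ⟨hu, hv, h⟩))
          · exact Or.inr (Or.inr (Or.inr ⟨hv, hu, h⟩))
    set F : RootedForest W := ⟨le, hle_refl, hle_antisymm, hle_trans, hle_chain⟩ with hF
    refine ⟨F, ?_, ?_, hreachle⟩
    · intro a b hab
      change a ≠ b ∧ (F.le a b ∨ F.le b a)
      refine ⟨hab.ne, ?_⟩
      by_cases h1 : a = root b
      · exact Or.inl (Or.inr (Or.inl h1))
      by_cases h2 : b = root a
      · exact Or.inr (Or.inr (Or.inl h2))
      have hra : root a = root b := hrooteq a b hab.reachable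
      have ha : a ∈ W' := by
        intro h
        exact h1 (h.trans hra)
      have hb : b ∈ W' := by
        intro h
        exact h2 (h.trans hra.symm)
      have hadj : H'.Adj ⟨a, ha⟩ ⟨b, hb⟩ := hab
      rcases (hF'le hadj).2 with h | h
      · exact Or.inl (Or.inr (Or.inr ⟨ha, hb, h⟩))
      · exact Or.inr (Or.inr (Or.inr ⟨hb, ha, h⟩))
    · have hbound : ∀ v : W, (Finset.univ.filter fun y => F.le y v).card ≤ n + 1 := by
        intro v
        by_cases hv : v ∈ W'
        · have hsubset : (Finset.univ.filter fun y => F.le y v) ⊆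
              insert (root v) ((Finset.univ.filter fun y => F'.le y ⟨v, hv⟩).image Subtype.val) := by
            intro y hy
            rw [Finset.mem_filter] at hy
            rcases hy.2 with rfl | rfl | ⟨hu, hv', h⟩
            · refine Finset.mem_insert_of_mem ?_
              exact Finset.mem_image.mpr ⟨⟨y, hv⟩, Finset.mem_filter.mpr
                ⟨Finset.mem_univ _, F'.le_refl _⟩, rfl⟩
            · exact Finset.mem_insert_self _ _
            · refine Finset.mem_insert_of_mem ?_
              exact Finset.mem_image.mpr ⟨⟨y, hu⟩, Finset.mem_filter.mpr
                ⟨Finset.mem_univ _, h⟩, rfl⟩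
          have hle1 : (Finset.univ.filter fun y => F'.le y ⟨v, hv⟩).card ≤ n :=
            le_trans (Finset.le_sup (f := fun x : ↥W' =>
              (Finset.univ.filter fun y => F'.le y x).card) (Finset.mem_univ (⟨v, hv⟩ : ↥W'))) hF'h
          calc (Finset.univ.filter fun y => F.le y v).card
              ≤ (insert (root v) ((Finset.univ.filter fun y => F'.le y ⟨v, hv⟩).image
                  Subtype.val)).card := Finset.card_le_card hsubset
            _ ≤ ((Finset.univ.filter fun y => F'.le y ⟨v, hv⟩).image Subtype.val).card + 1 :=
                Finset.card_insert_le _ _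
            _ ≤ (Finset.univ.filter fun y => F'.le y ⟨v, hv⟩).card + 1 := by
                gcongr
                exact Finset.card_image_le
            _ ≤ n + 1 := Nat.add_le_add_right hle1 1
        · have hveq : v = root v := not_not.mp hv
          have hsubset : (Finset.univ.filter fun y => F.le y v) ⊆ {v} := by
            intro y hy
            rw [Finset.mem_filter] at hy
            rcases hy.2 with rfl | rfl | ⟨hu, hv', h⟩
            · exact Finset.mem_singleton_self _
            · exact Finset.mem_singleton.mpr hveq.symm
            · exact absurd hv' hv
          have h1 := Finset.card_le_card hsubset
          simp only [Finset.card_singleton] at h1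
          exact le_trans h1 (by omega)
      simp only [RootedForest.height]
      apply Finset.sup_le
      intro v _
      have h2 := hbound v
      rw [Finset.filter_congr_decidable] at h2
      rw [Finset.filter_congr_decidable]
      exact h2

/-- In a `p`-centered coloring, any `i < p` color classes induce a subgraph of
tree-depth at most `i`. -/
theorem stmt2 {V α : Type} [Fintype V] (p : ℕ) (G : SimpleGraph V) (c : V → α)
    (hc : IsCenteredColoring p G c) (I : Finset α) (hI : I.card < p) :
    treeDepth (G.induce {v | c v ∈ I}) ≤ I.card := by
  have hyp : ∀ S : Set ↥{v | c v ∈ I}, ((G.induce {v | c v ∈ I}).induce S).Connected →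
      ((c ∘ Subtype.val) '' S).ncard ≤ I.card ∧
        ∃ x ∈ S, ∀ y ∈ S, (c ∘ Subtype.val) y = (c ∘ Subtype.val) x → y = x := by
    intro S hS
    have hT := induce_induce_connected' G _ S hS
    have hsub : c '' (Subtype.val '' S) ⊆ ↑I := by
      rintro _ ⟨_, ⟨⟨v, hv⟩, hvS, rfl⟩, rfl⟩
      exact hv
    have hcard : (c '' (Subtype.val '' S)).ncard ≤ I.card := by
      have := Set.ncard_le_ncard hsub (Set.toFinite _)
      rwa [Set.ncard_coe_finset] at this
    have himg : ((c ∘ Subtype.val) '' S) = c '' (Subtype.val '' S) :=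
      Set.image_comp c Subtype.val S
    refine ⟨by rw [himg]; exact hcard, ?_⟩
    rcases hc _ hT with ⟨x, hxT, hxu⟩ | hge
    · obtain ⟨x', hx'S, rfl⟩ := hxT
      exact ⟨x', hx'S, fun y hy hcy => Subtype.ext (hxu y.1 ⟨y, hy, rfl⟩ hcy)⟩
    · exfalso
      omega
  obtain ⟨F, h1, h2, -⟩ := centered_key I.card _ _ (c ∘ Subtype.val) hyp
  exact Nat.sInf_le ⟨F, h1, h2⟩
end

section
/- Let C be a class of graphs having low tree-width colorings and let p be an integer. Then there exists an integer X(p) such that every graph in C has a p-centered coloring using at most X(p) colors. -/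
open scoped Classical

universe u v

namespace CentAux

variable {V : Type} (H : SimpleGraph V) (r : V → V → Prop)

/-- back neighborhood -/
def Bset (x : V) : Set V := {y | r y x ∧ H.Adj y x}

variable (wf : WellFounded r)

noncomputable def gfn : V → ℕ :=
  wf.fix fun x rec => sInf {n | ∃ y, ∃ h : y ∈ Bset H r x, n = rec y h.1 + 1}

lemma gfn_eq (x : V) :
    gfn H r wf x = sInf {n | ∃ y, ∃ _h : y ∈ Bset H r x, n = gfn H r wf y + 1} := by
  unfold gfn
  rw [WellFounded.fix_eq]

lemma gfn_le {x y : V} (hy : y ∈ Bset H r x) : gfn H r wf x ≤ gfn H r wf y + 1 := by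
  rw [gfn_eq]
  exact Nat.sInf_le ⟨y, hy, rfl⟩

lemma exists_gfn_pred {x : V} (hne : (Bset H r x).Nonempty) :
    ∃ y, y ∈ Bset H r x ∧ gfn H r wf x = gfn H r wf y + 1 := by
  obtain ⟨y0, hy0⟩ := hne
  have hmem : gfn H r wf x ∈ {n | ∃ y, ∃ _h : y ∈ Bset H r x, n = gfn H r wf y + 1} := by
    rw [gfn_eq]
    exact Nat.sInf_mem ⟨_, y0, hy0, rfl⟩
  obtain ⟨y, hy, h⟩ := hmem
  exact ⟨y, hy, h⟩

lemma gfn_of_empty {x : V} (h : Bset H r x = ∅) : gfn H r wf x = 0 := by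
  rw [gfn_eq]
  convert Nat.sInf_empty
  ext n
  simp only [Set.mem_setOf_eq, Set.mem_empty_iff_false, iff_false]
  rintro ⟨y, hy, -⟩
  simp [h] at hy

lemma gfn_pos {x : V} (hne : (Bset H r x).Nonempty) : 0 < gfn H r wf x := by
  obtain ⟨y, _, h⟩ := exists_gfn_pred H r wf hne
  omega

variable {hcl0 : True}

/-- Lipschitz along back-edges -/
lemma gfn_lip (hcl : ∀ x : V, H.IsClique (Bset H r x)) (hto : IsStrictTotalOrder V r) : ∀ x : V, ∀ y ∈ Bset H r x, gfn H r wf y ≤ gfn H r wf x + 1 := by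
  intro x
  induction x using WellFounded.induction wf with
  | _ x ih =>
    intro y hy
    obtain ⟨w, hw, hxw⟩ := exists_gfn_pred H r wf ⟨y, hy⟩
    by_cases hyw : y = w
    · subst hyw; omega
    · have hadj : H.Adj y w := hcl x hy hw hyw
      haveI : IsStrictTotalOrder V r := hto
      rcases trichotomous_of r y w with h1 | h1 | h1
      · have : y ∈ Bset H r w := ⟨h1, hadj⟩
        have := ih w hw.1 y this
        omega
      · exact absurd h1 hyw
      · have : w ∈ Bset H r y := ⟨h1, hadj.symm⟩
        have := gfn_le H r wf this
        omega

lemma gfn_adj (hcl : ∀ x : V, H.IsClique (Bset H r x)) (hto : IsStrictTotalOrder V r)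
    {x y : V} (hadj : H.Adj x y) : gfn H r wf x ≤ gfn H r wf y + 1 := by
  haveI : IsStrictTotalOrder V r := hto
  rcases trichotomous_of r x y with h1 | h1 | h1
  · exact gfn_lip H r wf hcl hto y x ⟨h1, hadj⟩
  · subst h1; omega
  · exact gfn_le H r wf ⟨h1, hadj.symm⟩

noncomputable def mfn : V → V :=
  wf.fix fun x rec => if h : (Bset H r x).Nonempty then rec h.choose h.choose_spec.1 else x

lemma mfn_eq (x : V) :
    mfn H r wf x = if h : (Bset H r x).Nonempty then mfn H r wf h.choose else x := by
  unfold mfn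
  rw [WellFounded.fix_eq]

lemma mfn_spec : ∀ x : V, Bset H r (mfn H r wf x) = ∅ ∧ H.Reachable x (mfn H r wf x) := by
  intro x
  induction x using WellFounded.induction wf with
  | _ x ih =>
    rw [mfn_eq]
    by_cases h : (Bset H r x).Nonempty
    · rw [dif_pos h]
      obtain ⟨hB, hR⟩ := ih h.choose h.choose_spec.1
      exact ⟨hB, (h.choose_spec.2.symm.reachable).trans hR⟩
    · rw [dif_neg h]
      rw [Set.not_nonempty_iff_eq_empty] at h
      exact ⟨h, SimpleGraph.Reachable.refl x⟩

lemma mfn_of_empty {x : V} (h : Bset H r x = ∅) : mfn H r wf x = x := by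
  rw [mfn_eq, dif_neg (by simp [h])]

lemma mfn_back (hcl : ∀ x : V, H.IsClique (Bset H r x)) (hto : IsStrictTotalOrder V r) : ∀ x : V, ∀ y ∈ Bset H r x, mfn H r wf y = mfn H r wf x := by
  intro x
  induction x using WellFounded.induction wf with
  | _ x ih =>
    intro y hy
    have hne : (Bset H r x).Nonempty := ⟨y, hy⟩
    have hmx : mfn H r wf x = mfn H r wf hne.choose := by rw [mfn_eq, dif_pos hne]
    set w := hne.choose with hwdef
    have hw : w ∈ Bset H r x := hne.choose_spec
    by_cases hyw : y = w
    · rw [hyw, hmx]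
    · have hadj : H.Adj y w := hcl x hy hw hyw
      haveI : IsStrictTotalOrder V r := hto
      rcases trichotomous_of r y w with h1 | h1 | h1
      · have : y ∈ Bset H r w := ⟨h1, hadj⟩
        have := ih w hw.1 y this
        rw [this, hmx]
      · exact absurd h1 hyw
      · have : w ∈ Bset H r y := ⟨h1, hadj.symm⟩
        have := ih y hy.1 w this
        rw [← this, hmx]

lemma mfn_adj (hcl : ∀ x : V, H.IsClique (Bset H r x)) (hto : IsStrictTotalOrder V r)
    {x y : V} (hadj : H.Adj x y) : mfn H r wf x = mfn H r wf y := by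
  haveI : IsStrictTotalOrder V r := hto
  rcases trichotomous_of r x y with h1 | h1 | h1
  · exact mfn_back H r wf hcl hto y x ⟨h1, hadj⟩
  · subst h1; rfl
  · exact (mfn_back H r wf hcl hto x y ⟨h1, hadj.symm⟩).symm

lemma mfn_reach (hcl : ∀ x : V, H.IsClique (Bset H r x)) (hto : IsStrictTotalOrder V r)
    {x y : V} (h : H.Reachable x y) : mfn H r wf x = mfn H r wf y := by
  obtain ⟨w⟩ := h
  induction w with
  | nil => rfl
  | cons hadj _ ihw => exact (mfn_adj H r wf hcl hto hadj).trans ihw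


/- list helpers -/
lemma head?_of_append {α : Type*} {s t : List α} {u : α}
    (h : (s ++ t).head? = some u) (hs : s ≠ []) : s.head? = some u := by
  cases s with
  | nil => exact absurd rfl hs
  | cons a s' => simpa using h

lemma head?_append_left {α : Type*} {s t : List α} {u : α}
    (h : s.head? = some u) : (s ++ t).head? = some u := by
  cases s with
  | nil => simp at h
  | cons a s' => simpa using h

lemma getLast?_of_append {α : Type*} {s t : List α} {w : α}
    (h : (s ++ t).getLast? = some w) (ht : t ≠ []) : t.getLast? = some w := by
  rw [List.getLast?_append] at h
  have : t.getLast? ≠ none := fun hn => ht (List.getLast?_eq_none_iff.mp hn)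
  cases hlt : t.getLast? with
  | none => exact absurd hlt this
  | some a => rw [hlt] at h; simpa using h

lemma getLast?_append_right {α : Type*} {s t : List α} {w : α}
    (h : t.getLast? = some w) : (s ++ t).getLast? = some w := by
  rw [List.getLast?_append, h]; rfl

lemma mem_of_getLast?' {α : Type*} : ∀ {l : List α} {a : α}, l.getLast? = some a → a ∈ l := by
  intro l
  induction l with
  | nil => intro a h; simp at h
  | cons b l' ih =>
    intro a h
    cases l' with
    | nil => simp at h; simp [h]
    | cons c l'' =>
      rw [List.getLast?_cons_cons] at h
      exact List.mem_cons_of_mem _ (ih h)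

lemma mem_of_head?' {α : Type*} {l : List α} {a : α} (h : l.head? = some a) : a ∈ l := by
  cases l with
  | nil => simp at h
  | cons b l' => simp at h; simp [h]

variable {V : Type} (H : SimpleGraph V) (r : V → V → Prop)

lemma flip_adj : (flip H.Adj) = H.Adj := by
  ext a b
  exact ⟨fun h => h.symm, fun h => h.symm⟩

lemma chain'_reverse_adj {l : List V} (h : l.Chain' H.Adj) : l.reverse.Chain' H.Adj := by
  refine List.isChain_reverse.mpr ?_
  rw [show (fun a b => H.Adj b a) = H.Adj from flip_adj H]
  exact h

lemma exists_rmax (hto : IsStrictTotalOrder V r) :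
    ∀ (l : List V), l ≠ [] → ∃ z ∈ l, ∀ v ∈ l, v ≠ z → r v z := by
  haveI : IsStrictTotalOrder V r := hto
  intro l
  induction l with
  | nil => intro h; exact absurd rfl h
  | cons a l' ih =>
    intro _
    cases l' with
    | nil =>
      refine ⟨a, by simp, ?_⟩
      intro v hv hne
      simp at hv
      exact absurd hv hne
    | cons b l'' =>
      obtain ⟨z, hz, hzmax⟩ := ih (by simp)
      rcases trichotomous_of r a z with h1 | h1 | h1
      · refine ⟨z, List.mem_cons_of_mem _ hz, ?_⟩
        intro v hv hne
        rcases List.mem_cons.mp hv with rfl | hv'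
        · exact h1
        · exact hzmax v hv' hne
      · subst h1
        refine ⟨a, List.mem_cons_of_mem _ hz, ?_⟩
        intro v hv hne
        rcases List.mem_cons.mp hv with rfl | hv'
        · exact absurd rfl hne
        · exact hzmax v hv' hne
      · refine ⟨a, List.mem_cons_self, ?_⟩
        intro v hv hne
        rcases List.mem_cons.mp hv with rfl | hv'
        · exact absurd rfl hne
        · by_cases hvz : v = z
          · subst hvz; exact h1
          · exact _root_.trans (hzmax v hv' hvz) h1

lemma chain_reachable : ∀ (l : List V) (u w : V), l.Chain' H.Adj → l.head? = some u →
    l.getLast? = some w → H.Reachable u w := by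
  intro l
  induction l with
  | nil => intro u w _ h; simp at h
  | cons a l' ih =>
    intro u w hc hh hl
    have hau : a = u := by simpa using hh
    subst hau
    cases l' with
    | nil =>
      simp at hl
      subst hl
      exact SimpleGraph.Reachable.refl _
    | cons b l'' =>
      have hadj : H.Adj a b := (List.isChain_cons_cons.mp hc).1
      have := ih b w (List.isChain_cons_cons.mp hc).2 (by simp) (by rwa [List.getLast?_cons_cons] at hl)
      exact hadj.reachable.trans this


lemma surgery (hcl : ∀ x : V, H.IsClique (Bset H r x))
    (l : List V) (u w z : V) (hc : l.Chain' H.Adj) (hh : l.head? = some u)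
    (hl : l.getLast? = some w) (hz : z ∈ l) (hzu : z ≠ u) (hzw : z ≠ w)
    (hmax : ∀ v ∈ l, v ≠ z → r v z) :
    ∃ l' : List V, l'.Chain' H.Adj ∧ l'.head? = some u ∧ l'.getLast? = some w ∧
      (∀ v ∈ l', v ∈ l) ∧ l'.length < l.length := by
  obtain ⟨s, t, rfl⟩ := List.append_of_mem hz
  have hs : s ≠ [] := by
    rintro rfl
    simp at hh
    exact hzu hh
  have ht : t ≠ [] := by
    rintro rfl
    rw [List.getLast?_concat] at hl
    exact hzw (by simpa using hl)
  obtain ⟨x, hsx⟩ : ∃ x, s.getLast? = some x := by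
    cases hx : s.getLast? with
    | none => exact absurd (List.getLast?_eq_none_iff.mp hx) hs
    | some a => exact ⟨a, rfl⟩
  obtain ⟨y, t', rfl⟩ : ∃ y t', t = y :: t' := by
    cases t with
    | nil => exact absurd rfl ht
    | cons y t' => exact ⟨y, t', rfl⟩
  obtain ⟨hcs, hczt, hbd⟩ := List.isChain_append.mp hc
  have hxz : H.Adj x z := hbd x hsx z rfl
  have hzy : H.Adj z y := (List.isChain_cons_cons.mp hczt).1
  have hxmem : x ∈ s := mem_of_getLast?' hsx
  have hxB : x ∈ Bset H r z :=
    ⟨hmax x (by simp [hxmem]) hxz.ne, hxz⟩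
  have hyB : y ∈ Bset H r z :=
    ⟨hmax y (by simp) (hzy.ne'), hzy.symm⟩
  have hhead : s.head? = some u := head?_of_append hh hs
  by_cases hxy : x = y
  · subst hxy
    cases t' with
    | nil =>
      have hxw : x = w := by
        have := getLast?_of_append hl (t := z :: [x]) (by simp)
        simpa using this
      refine ⟨s, hcs, hhead, by rw [hsx, hxw], fun v hv => by simp [hv], by simp⟩
    | cons q t'' =>
      have hcq : List.Chain' H.Adj (q :: t'') := (hczt.tail).tail
      have hxq : H.Adj x q := (List.isChain_cons_cons.mp (hczt.tail)).1
      refine ⟨s ++ q :: t'', ?_, head?_append_left hhead, ?_, ?_, ?_⟩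
      · exact List.isChain_append.mpr ⟨hcs, hcq, by
          intro p hp qq hqq
          rw [hsx] at hp
          simp at hp hqq
          rw [← hp, ← hqq] at *
          exact hp ▸ hqq ▸ hxq⟩
      · have : (z :: x :: q :: t'').getLast? = some w := getLast?_of_append hl (by simp)
        rw [List.getLast?_cons_cons, List.getLast?_cons_cons] at this
        exact getLast?_append_right this
      · intro v hv
        rcases List.mem_append.mp hv with h1 | h1
        · simp [h1]
        · simp [h1]
      · simp
  · have hadjxy : H.Adj x y := hcl z hxB hyB hxy
    refine ⟨s ++ y :: t', ?_, head?_append_left hhead, ?_, ?_, ?_⟩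
    · exact List.isChain_append.mpr ⟨hcs, hczt.tail, by
        intro p hp qq hqq
        rw [hsx] at hp
        simp at hp hqq
        rw [← hp, ← hqq] at *
        exact hp ▸ hqq ▸ hadjxy⟩
    · have : (z :: y :: t').getLast? = some w := getLast?_of_append hl (by simp)
      rw [List.getLast?_cons_cons] at this
      exact getLast?_append_right this
    · intro v hv
      rcases List.mem_append.mp hv with h1 | h1
      · simp [h1]
      · simp [h1]
    · simp

lemma eq_cons_of_head? {α : Type*} {l : List α} {u : α} (h : l.head? = some u) :
    ∃ t, l = u :: t := by
  cases l with
  | nil => simp at h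
  | cons a t =>
    have : a = u := by simpa using h
    exact ⟨t, by rw [this]⟩

lemma key (wf : WellFounded r) (hcl : ∀ x : V, H.IsClique (Bset H r x))
    (hto : IsStrictTotalOrder V r) :
    ∀ n : ℕ, ∀ (u w : V) (l1 l2 : List V),
    gfn H r wf w = gfn H r wf u →
    l1.Chain' H.Adj → l1.head? = some u → l1.getLast? = some w →
    (∀ v ∈ l1, v = u ∨ v = w ∨ gfn H r wf u < gfn H r wf v) →
    l2.Chain' H.Adj → l2.head? = some u → l2.getLast? = some w →
    (∀ v ∈ l2, v = u ∨ v = w ∨ gfn H r wf v < gfn H r wf u) →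
    l1.length + l2.length ≤ n →
    u = w ∨ H.Adj u w := by
  intro n
  induction n using Nat.strong_induction_on with
  | _ n ih =>
  intro u w l1 l2 hgw hc1 hh1 hl1 hm1 hc2 hh2 hl2 hm2 hlen
  have contra : ∀ (u' x y : V), x ∈ Bset H r u' → y ∈ Bset H r u' →
      gfn H r wf u' < gfn H r wf x → gfn H r wf y < gfn H r wf u' → False := by
    intro u' x y hx hy h1 h2
    have hne : x ≠ y := by intro h; subst h; omega
    have hadj : H.Adj x y := hcl u' hx hy hne
    have := gfn_adj H r wf hcl hto hadj
    omega
  obtain ⟨t1, rfl⟩ := eq_cons_of_head? hh1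
  obtain ⟨t2, rfl⟩ := eq_cons_of_head? hh2
  cases t1 with
  | nil => exact Or.inl (by simpa using hl1)
  | cons x t1' =>
  cases t2 with
  | nil => exact Or.inl (by simpa using hl2)
  | cons y t2' =>
  have hadjux : H.Adj u x := (List.isChain_cons_cons.mp hc1).1
  have hadjuy : H.Adj u y := (List.isChain_cons_cons.mp hc2).1
  by_cases hxw : x = w
  · exact Or.inr (hxw ▸ hadjux)
  by_cases hyw : y = w
  · exact Or.inr (hyw ▸ hadjuy)
  obtain ⟨z, hzmem, hzmax⟩ := exists_rmax r hto ((u :: x :: t1') ++ (u :: y :: t2')) (by simp)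
  by_cases hzu : z = u
  · subst hzu
    have hxB : x ∈ Bset H r z :=
      ⟨hzmax x (List.mem_append.mpr (Or.inl (by simp))) (Ne.symm hadjux.ne), hadjux.symm⟩
    have hyB : y ∈ Bset H r z :=
      ⟨hzmax y (List.mem_append.mpr (Or.inr (by simp))) (Ne.symm hadjuy.ne), hadjuy.symm⟩
    have hgx : gfn H r wf z < gfn H r wf x := by
      rcases hm1 x (by simp) with h | h | h
      · exact absurd h (Ne.symm hadjux.ne)
      · exact absurd h hxw
      · exact h
    have hgy : gfn H r wf y < gfn H r wf z := by
      rcases hm2 y (by simp) with h | h | h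
      · exact absurd h (Ne.symm hadjuy.ne)
      · exact absurd h hyw
      · exact h
    exact (contra z x y hxB hyB hgx hgy).elim
  by_cases hzw : z = w
  · rw [hzw] at hzmax
    have hh1' : (u :: x :: t1').reverse.head? = some w := by
      rw [List.head?_reverse]; exact hl1
    have hh2' : (u :: y :: t2').reverse.head? = some w := by
      rw [List.head?_reverse]; exact hl2
    obtain ⟨s1, he1⟩ := eq_cons_of_head? hh1'
    obtain ⟨s2, he2⟩ := eq_cons_of_head? hh2'
    obtain ⟨xb, s1', rfl⟩ : ∃ a t, s1 = a :: t := by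
      cases s1 with
      | nil => exfalso; have := congrArg List.length he1; simp at this
      | cons a t => exact ⟨a, t, rfl⟩
    obtain ⟨yb, s2', rfl⟩ : ∃ a t, s2 = a :: t := by
      cases s2 with
      | nil => exfalso; have := congrArg List.length he2; simp at this
      | cons a t => exact ⟨a, t, rfl⟩
    have hr1 : List.Chain' H.Adj (w :: xb :: s1') := he1 ▸ chain'_reverse_adj H hc1
    have hr2 : List.Chain' H.Adj (w :: yb :: s2') := he2 ▸ chain'_reverse_adj H hc2
    have hadjwx : H.Adj w xb := (List.isChain_cons_cons.mp hr1).1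
    have hadjwy : H.Adj w yb := (List.isChain_cons_cons.mp hr2).1
    have hxmem : xb ∈ (u :: x :: t1') := by
      have : xb ∈ (u :: x :: t1').reverse := by rw [he1]; simp
      exact List.mem_reverse.mp this
    have hymem : yb ∈ (u :: y :: t2') := by
      have : yb ∈ (u :: y :: t2').reverse := by rw [he2]; simp
      exact List.mem_reverse.mp this
    by_cases hxbu : xb = u
    · exact Or.inr (hxbu ▸ hadjwx).symm
    by_cases hybu : yb = u
    · exact Or.inr (hybu ▸ hadjwy).symm
    have hxB : xb ∈ Bset H r w :=
      ⟨hzmax xb (List.mem_append.mpr (Or.inl hxmem)) (Ne.symm hadjwx.ne), hadjwx.symm⟩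
    have hyB : yb ∈ Bset H r w :=
      ⟨hzmax yb (List.mem_append.mpr (Or.inr hymem)) (Ne.symm hadjwy.ne), hadjwy.symm⟩
    have hgx : gfn H r wf w < gfn H r wf xb := by
      rcases hm1 xb hxmem with h | h | h
      · exact absurd h hxbu
      · exact absurd h (Ne.symm hadjwx.ne)
      · omega
    have hgy : gfn H r wf yb < gfn H r wf w := by
      rcases hm2 yb hymem with h | h | h
      · exact absurd h hybu
      · exact absurd h (Ne.symm hadjwy.ne)
      · omega
    exact (contra w xb yb hxB hyB hgx hgy).elim
  rcases List.mem_append.mp hzmem with hzin | hzin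
  · have hgz : gfn H r wf u < gfn H r wf z := by
      rcases hm1 z hzin with h | h | h
      · exact absurd h hzu
      · exact absurd h hzw
      · exact h
    obtain ⟨l1', hc1', hh1', hl1', hmem1', hlen1'⟩ :=
      surgery H r hcl (u :: x :: t1') u w z hc1 hh1 hl1 hzin hzu hzw
        (fun v hv hne => hzmax v (List.mem_append.mpr (Or.inl hv)) hne)
    exact ih (l1'.length + (u :: y :: t2').length)
      (by have := hlen1'; omega)
      u w l1' (u :: y :: t2') hgw hc1' hh1' hl1'
      (fun v hv => hm1 v (hmem1' v hv)) hc2 hh2 hl2 hm2 le_rfl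
  · have hgz : gfn H r wf z < gfn H r wf u := by
      rcases hm2 z hzin with h | h | h
      · exact absurd h hzu
      · exact absurd h hzw
      · exact h
    obtain ⟨l2', hc2', hh2', hl2', hmem2', hlen2'⟩ :=
      surgery H r hcl (u :: y :: t2') u w z hc2 hh2 hl2 hzin hzu hzw
        (fun v hv hne => hzmax v (List.mem_append.mpr (Or.inr hv)) hne)
    exact ih ((u :: x :: t1').length + l2'.length)
      (by have := hlen2'; omega)
      u w (u :: x :: t1') l2' hgw hc1 hh1 hl1 hm1 hc2' hh2' hl2'
      (fun v hv => hm2 v (hmem2' v hv)) le_rfl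

lemma getLast?_cons_of_ne_nil {α : Type*} {l : List α} (a : α) (h : l ≠ []) :
    (a :: l).getLast? = l.getLast? := by
  cases l with
  | nil => exact absurd rfl h
  | cons b t => exact List.getLast?_cons_cons

lemma exists_descent (wf : WellFounded r) (hcl : ∀ x : V, H.IsClique (Bset H r x))
    (hto : IsStrictTotalOrder V r) :
    ∀ (n : ℕ) (x : V), gfn H r wf x ≤ n →
    ∃ l : List V, l.Chain' H.Adj ∧ l.head? = some x ∧ l.getLast? = some (mfn H r wf x) ∧
      ∀ y ∈ l, y = x ∨ gfn H r wf y < gfn H r wf x := by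
  intro n
  induction n with
  | zero =>
    intro x hx
    have hB : Bset H r x = ∅ := by
      by_contra hne
      have := gfn_pos H r wf (Set.nonempty_iff_ne_empty.mpr hne)
      omega
    exact ⟨[x], List.isChain_singleton x, rfl, by rw [mfn_of_empty H r wf hB]; simp, by
      intro y hy; simp at hy; exact Or.inl hy⟩
  | succ n ihn =>
    intro x hx
    by_cases hB : (Bset H r x).Nonempty
    · obtain ⟨w, hw, hxw⟩ := exists_gfn_pred H r wf hB
      obtain ⟨l', hc', hh', hl', hm'⟩ := ihn w (by omega)
      have hlne : l' ≠ [] := by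
        intro h; rw [h] at hh'; simp at hh'
      refine ⟨x :: l', ?_, rfl, ?_, ?_⟩
      · refine List.isChain_cons.mpr ⟨?_, hc'⟩
        intro y hy
        rw [hh'] at hy
        simp at hy
        subst hy
        exact hw.2.symm
      · rw [getLast?_cons_of_ne_nil x hlne, hl', mfn_back H r wf hcl hto x w hw]
      · intro y hy
        rcases List.mem_cons.mp hy with rfl | hy'
        · exact Or.inl rfl
        · rcases hm' y hy' with rfl | h
          · exact Or.inr (by omega)
          · exact Or.inr (by omega)
    · rw [Set.not_nonempty_iff_eq_empty] at hB
      exact ⟨[x], List.isChain_singleton x, rfl, by rw [mfn_of_empty H r wf hB]; simp, by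
        intro y hy; simp at hy; exact Or.inl hy⟩

lemma ivt (wf : WellFounded r) (hcl : ∀ x : V, H.IsClique (Bset H r x))
    (hto : IsStrictTotalOrder V r) :
    ∀ (l : List V) (u w : V) (c : ℕ), l.Chain' H.Adj → l.head? = some u →
    l.getLast? = some w → gfn H r wf u ≤ c → c ≤ gfn H r wf w →
    ∃ z ∈ l, gfn H r wf z = c := by
  intro l
  induction l with
  | nil => intro u w c _ hh; simp at hh
  | cons a t ih =>
    intro u w c hc hh hl h1 h2
    have hau : a = u := by simpa using hh
    subst hau
    cases t with
    | nil =>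
      have : a = w := by simpa using hl
      subst this
      exact ⟨a, by simp, by omega⟩
    | cons b t' =>
      by_cases hc0 : gfn H r wf a = c
      · exact ⟨a, by simp, hc0⟩
      · have hab : H.Adj a b := (List.isChain_cons_cons.mp hc).1
        have hb : gfn H r wf b ≤ gfn H r wf a + 1 := gfn_adj H r wf hcl hto hab.symm
        obtain ⟨z, hz, hzc⟩ := ih b w c (List.isChain_cons_cons.mp hc).2 rfl
          (by rwa [List.getLast?_cons_cons] at hl) (by omega) h2
        exact ⟨z, List.mem_cons_of_mem _ hz, hzc⟩

lemma first_return (wf : WellFounded r) :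
    ∀ (l : List V) (w : V) (a : ℕ), l.getLast? = some w → gfn H r wf w = a →
    (∀ v ∈ l, a ≤ gfn H r wf v) →
    ∃ mid y rest, l = mid ++ y :: rest ∧ (∀ v ∈ mid, a < gfn H r wf v) ∧
      gfn H r wf y = a ∧ (y :: rest).getLast? = some w := by
  intro l
  induction l with
  | nil => intro w a hl; simp at hl
  | cons h t ih =>
    intro w a hl hw hmem
    by_cases hh : gfn H r wf h = a
    · exact ⟨[], h, t, by simp, by simp, hh, hl⟩
    · have ht : t ≠ [] := by
        rintro rfl
        simp at hl
        subst hl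
        exact hh hw
      obtain ⟨mid, y, rest, het, hmid, hgy, hly⟩ := ih w a
        (by rwa [getLast?_cons_of_ne_nil h ht] at hl) hw
        (fun v hv => hmem v (List.mem_cons_of_mem _ hv))
      refine ⟨h :: mid, y, rest, by rw [List.cons_append, het], ?_, hgy, hly⟩
      intro v hv
      rcases List.mem_cons.mp hv with rfl | hv'
      · have := hmem v (by simp)
        omega
      · exact hmid v hv'

lemma excursion (wf : WellFounded r) (hcl : ∀ x : V, H.IsClique (Bset H r x))
    (hto : IsStrictTotalOrder V r) :
    ∀ (n : ℕ) (l : List V) (u w : V), l.length ≤ n → l.Chain' H.Adj →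
    l.head? = some u → l.getLast? = some w →
    (∀ v ∈ l, gfn H r wf u ≤ gfn H r wf v) → gfn H r wf w = gfn H r wf u →
    ∃ l' : List V, l'.Chain' H.Adj ∧ l'.head? = some u ∧ l'.getLast? = some w ∧
      ∀ v ∈ l', v ∈ l ∧ gfn H r wf v = gfn H r wf u := by
  intro n
  induction n using Nat.strong_induction_on with
  | _ n ih =>
  intro l u w hlen hc hh hl hmem hgw
  obtain ⟨t, rfl⟩ := eq_cons_of_head? hh
  cases t with
  | nil =>
    have huw : u = w := by simpa using hl
    subst huw
    exact ⟨[u], List.isChain_singleton u, rfl, by simp, by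
      intro v hv; simp at hv; subst hv; exact ⟨by simp, rfl⟩⟩
  | cons b t' =>
    have hub : H.Adj u b := (List.isChain_cons_cons.mp hc).1
    have hlast' : (b :: t').getLast? = some w := by rwa [List.getLast?_cons_cons] at hl
    by_cases hgb : gfn H r wf b = gfn H r wf u
    · obtain ⟨l'', hc'', hh'', hl'', hm''⟩ := ih (b :: t').length (by simp at hlen ⊢; omega)
        (b :: t') b w le_rfl (List.isChain_cons_cons.mp hc).2 rfl hlast'
        (fun v hv => hgb ▸ hmem v (List.mem_cons_of_mem _ hv)) (by rw [hgw, hgb])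
      have hlne : l'' ≠ [] := by intro h; rw [h] at hh''; simp at hh''
      refine ⟨u :: l'', ?_, rfl, ?_, ?_⟩
      · refine List.isChain_cons.mpr ⟨?_, hc''⟩
        intro y hy
        rw [hh''] at hy; simp at hy; subst hy
        exact hub
      · rw [getLast?_cons_of_ne_nil u hlne, hl'']
      · intro v hv
        rcases List.mem_cons.mp hv with rfl | hv'
        · exact ⟨by simp, rfl⟩
        · obtain ⟨h1, h2⟩ := hm'' v hv'
          exact ⟨List.mem_cons_of_mem _ h1, by omega⟩
    · obtain ⟨mid, y, rest, het, hmid, hgy, hlasty⟩ := first_return H r wf (b :: t') w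
        (gfn H r wf u) hlast' hgw (fun v hv => hmem v (List.mem_cons_of_mem _ hv))
      -- the upper walk from u to y
      have hpre : ((u :: mid) ++ [y]).Chain' H.Adj := by
        refine hc.prefix ⟨rest, ?_⟩
        rw [het]
        simp
      have hprehead : ((u :: mid) ++ [y]).head? = some u := head?_append_left rfl
      have hprelast : ((u :: mid) ++ [y]).getLast? = some y := List.getLast?_concat
      have hmuy : mfn H r wf u = mfn H r wf y :=
        mfn_reach H r wf hcl hto (chain_reachable H _ u y hpre hprehead hprelast)
      obtain ⟨du, hcdu, hhdu, hldu, hmdu⟩ := exists_descent H r wf hcl hto (gfn H r wf u) u le_rfl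
      obtain ⟨dy, hcdy, hhdy, hldy, hmdy⟩ := exists_descent H r wf hcl hto (gfn H r wf y) y le_rfl
      have hdune : du ≠ [] := by intro h; rw [h] at hhdu; simp at hhdu
      obtain ⟨ty, hety⟩ := eq_cons_of_head?
        (show dy.reverse.head? = some (mfn H r wf y) by rw [List.head?_reverse]; exact hldy)
      have hctyfull : (mfn H r wf y :: ty).Chain' H.Adj := hety ▸ chain'_reverse_adj H hcdy
      have hl2c : (du ++ ty).Chain' H.Adj := by
        refine List.isChain_append.mpr ⟨hcdu, hctyfull.tail, ?_⟩
        intro p hp q hq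
        rw [hldu] at hp
        simp at hp
        subst hp
        rw [hmuy]
        exact (List.isChain_cons.mp hctyfull).1 q hq
      have hl2h : (du ++ ty).head? = some u := head?_append_left hhdu
      have hl2l : (du ++ ty).getLast? = some y := by
        cases hty : ty with
        | nil =>
          subst hty
          have h1 : dy.reverse.getLast? = some y := by rw [List.getLast?_reverse, hhdy]
          rw [hety] at h1
          simp at h1
          simp [hldu, hmuy, h1]
        | cons q ty' =>
          subst hty
          have h1 : dy.reverse.getLast? = some y := by rw [List.getLast?_reverse, hhdy]
          rw [hety, List.getLast?_cons_cons] at h1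
          exact getLast?_append_right h1
      have hl2m : ∀ v ∈ du ++ ty, v = u ∨ v = y ∨ gfn H r wf v < gfn H r wf u := by
        intro v hv
        rcases List.mem_append.mp hv with h1 | h1
        · rcases hmdu v h1 with rfl | h2
          · exact Or.inl rfl
          · exact Or.inr (Or.inr h2)
        · have : v ∈ dy := by
            have : v ∈ dy.reverse := by rw [hety]; exact List.mem_cons_of_mem _ h1
            exact List.mem_reverse.mp this
          rcases hmdy v this with rfl | h2
          · exact Or.inr (Or.inl rfl)
          · exact Or.inr (Or.inr (by omega))
      have hl1m : ∀ v ∈ (u :: mid) ++ [y], v = u ∨ v = y ∨ gfn H r wf u < gfn H r wf v := by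
        intro v hv
        rcases List.mem_append.mp hv with h1 | h1
        · rcases List.mem_cons.mp h1 with rfl | h2
          · exact Or.inl rfl
          · exact Or.inr (Or.inr (hmid v h2))
        · simp at h1
          exact Or.inr (Or.inl h1)
      have hkey := key H r wf hcl hto (((u :: mid) ++ [y]).length + (du ++ ty).length)
        u y ((u :: mid) ++ [y]) (du ++ ty) (by rw [hgy]) hpre hprehead hprelast hl1m
        hl2c hl2h hl2l hl2m le_rfl
      -- recurse on y :: rest
      have hsuffix : (y :: rest) <:+ (u :: b :: t') := by
        refine ⟨u :: mid, ?_⟩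
        show u :: (mid ++ y :: rest) = u :: b :: t'
        rw [← het]
      have hmemyr : ∀ v ∈ y :: rest, v ∈ u :: b :: t' := fun v hv => hsuffix.mem hv
      have hlenlt : (y :: rest).length < n := by
        have := congrArg List.length het
        simp at this hlen ⊢
        omega
      obtain ⟨l'', hc'', hh'', hl'', hm''⟩ := ih (y :: rest).length hlenlt (y :: rest) y w
        le_rfl (hc.suffix hsuffix) rfl hlasty
        (fun v hv => hgy ▸ hmem v (hmemyr v hv)) (by rw [hgw, hgy])
      rcases hkey with huy | hadjuy
      · refine ⟨l'', hc'', by rw [hh'', huy], hl'', ?_⟩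
        intro v hv
        obtain ⟨h1, h2⟩ := hm'' v hv
        exact ⟨hmemyr v h1, by omega⟩
      · have hlne : l'' ≠ [] := by intro h; rw [h] at hh''; simp at hh''
        refine ⟨u :: l'', ?_, rfl, ?_, ?_⟩
        · refine List.isChain_cons.mpr ⟨?_, hc''⟩
          intro q hq
          rw [hh''] at hq; simp at hq; subst hq
          exact hadjuy
        · rw [getLast?_cons_of_ne_nil u hlne, hl'']
        · intro v hv
          rcases List.mem_cons.mp hv with rfl | hv'
          · exact ⟨by simp, rfl⟩
          · obtain ⟨h1, h2⟩ := hm'' v hv'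
            exact ⟨hmemyr v h1, by omega⟩

lemma centered_mono {V : Type u} {α : Type v} {p : ℕ} {G G' : SimpleGraph V} (hle : G ≤ G')
    {c : V → α} (h : IsCenteredColoring p G' c) : IsCenteredColoring p G c := by
  intro S hS
  exact h S (hS.mono (fun a b hab => hle hab))

lemma centered_comp {V : Type u} {α : Type v} {β : Type*} {p : ℕ} {G : SimpleGraph V}
    {c : V → α} (e : α → β) (he : Function.Injective e) (h : IsCenteredColoring p G c) :
    IsCenteredColoring p G (fun v => e (c v)) := by
  intro S hS
  rcases h S hS with ⟨x, hx, hux⟩ | hcard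
  · exact Or.inl ⟨x, hx, fun y hy hey => hux y hy (he hey)⟩
  · right
    have himg : (fun v => e (c v)) '' S = e '' (c '' S) := by rw [Set.image_image]
    rw [himg, Set.ncard_image_of_injective _ he]
    exact hcard

lemma iso_connected {V W : Type*} {A : SimpleGraph V} {B : SimpleGraph W} (e : A ≃g B)
    (h : A.Connected) : B.Connected := by
  rw [SimpleGraph.connected_iff]
  refine ⟨fun x y => ?_, ⟨e h.nonempty.some⟩⟩
  have h2 := (h.preconnected (e.symm x) (e.symm y)).map e.toHom
  simpa using h2

def induceInduceIso {V : Type*} (G : SimpleGraph V) (A T : Set V) (h : T ⊆ A) :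
    G.induce T ≃g (G.induce A).induce {x : ↥A | x.1 ∈ T} where
  toFun x := ⟨⟨x.1, h x.2⟩, x.2⟩
  invFun y := ⟨y.1.1, y.2⟩
  left_inv x := rfl
  right_inv y := rfl
  map_rel_iff' := Iff.rfl

lemma chain_induce_reachable {V : Type*} (H : SimpleGraph V) (X : Set V) :
    ∀ (l : List V) (u w : V), l.Chain' H.Adj → (∀ v ∈ l, v ∈ X) → l.head? = some u →
    l.getLast? = some w → ∀ (hu : u ∈ X) (hw : w ∈ X),
    (H.induce X).Reachable ⟨u, hu⟩ ⟨w, hw⟩ := by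
  intro l
  induction l with
  | nil => intro u w _ _ hh; simp at hh
  | cons a t ih =>
    intro u w hc hX hh hl hu hw
    have hau : a = u := by simpa using hh
    subst hau
    cases t with
    | nil =>
      have : a = w := by simpa using hl
      subst this
      rfl
    | cons b t' =>
      have hb : b ∈ X := hX b (by simp)
      have hadj : (H.induce X).Adj ⟨a, hu⟩ ⟨b, hb⟩ := (List.isChain_cons_cons.mp hc).1
      exact hadj.reachable.trans (ih b w (List.isChain_cons_cons.mp hc).2
        (fun v hv => hX v (List.mem_cons_of_mem _ hv)) rfl
        (by rwa [List.getLast?_cons_cons] at hl) hb hw)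

lemma induce_reachable_chain {V : Type*} (H : SimpleGraph V) (X : Set V) {x y : ↥X}
    (h : (H.induce X).Reachable x y) :
    ∃ l : List V, l.Chain' H.Adj ∧ (∀ v ∈ l, v ∈ X) ∧ l.head? = some x.1 ∧
      l.getLast? = some y.1 := by
  obtain ⟨wlk⟩ := h
  induction wlk with
  | nil =>
    rename_i a
    exact ⟨[a.1], List.isChain_singleton _, by simp [a.2], rfl, by simp⟩
  | cons hadj pw ih =>
    rename_i a b c
    obtain ⟨l, hc, hX, hh, hl⟩ := ih
    have hlne : l ≠ [] := by intro h; rw [h] at hh; simp at hh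
    refine ⟨a.1 :: l, ?_, ?_, rfl, ?_⟩
    · refine List.isChain_cons.mpr ⟨?_, hc⟩
      intro q hq
      rw [hh] at hq; simp at hq; subst hq
      exact hadj
    · intro v hv
      rcases List.mem_cons.mp hv with rfl | hv'
      · exact a.2
      · exact hX v hv'
    · rw [getLast?_cons_of_ne_nil _ hlne, hl]

lemma ktree_mono {V : Type u} {H : SimpleGraph V} {k k' : ℕ} (h : IsKTree k H) (hk : k ≤ k') :
    IsKTree k' H := by
  obtain ⟨r, hto, hx⟩ := h
  exact ⟨r, hto, fun x => ⟨(hx x).1, le_trans (hx x).2 hk⟩⟩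

lemma ktree_zero_no_edges {V : Type u} [Fintype V] {H : SimpleGraph V} (h : IsKTree 0 H) :
    ∀ x y : V, ¬ H.Adj x y := by
  obtain ⟨r, hto, hx⟩ := h
  haveI := hto
  have hemp : ∀ z : V, {y | r y z ∧ H.Adj y z} = ∅ := by
    intro z
    have h0 : {y | r y z ∧ H.Adj y z}.ncard = 0 := le_antisymm (hx z).2 (Nat.zero_le _)
    exact Set.ncard_eq_zero (Set.toFinite _) |>.mp h0
  intro x y hadj
  rcases trichotomous_of r x y with h1 | h1 | h1
  · have : x ∈ {z | r z y ∧ H.Adj z y} := ⟨h1, hadj⟩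
    rw [hemp y] at this
    exact this
  · exact hadj.ne h1
  · have : y ∈ {z | r z x ∧ H.Adj z x} := ⟨h1, hadj.symm⟩
    rw [hemp x] at this
    exact this

lemma tw_witness {V : Type} [Fintype V] (G : SimpleGraph V) {t : ℕ} (h : treeWidth G ≤ t) :
    ∃ H, G ≤ H ∧ IsKTree t H := by
  have hne : {k : ℕ | ∃ H : SimpleGraph V, G ≤ H ∧ IsKTree k H}.Nonempty := by
    refine ⟨Fintype.card V, ⊤, le_top, ?_⟩
    set e := Fintype.equivFin V with he
    refine ⟨fun x y => e x < e y, ?_, ?_⟩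
    · haveI h1 : IsTrichotomous V (fun x y => e x < e y) := ⟨fun a b h1 h2 =>
        e.injective (le_antisymm (not_lt.mp h2) (not_lt.mp h1))⟩
      haveI h2 : IsTrans V (fun x y => e x < e y) := ⟨fun a b c hab hbc => lt_trans hab hbc⟩
      haveI h3 : IsIrrefl V (fun x y => e x < e y) := ⟨fun a => lt_irrefl _⟩
      exact { }
    · intro x
      constructor
      · intro a _ b _ hab
        exact (SimpleGraph.top_adj a b).mpr hab
      · calc {y | (fun x y => e x < e y) y x ∧ (⊤ : SimpleGraph V).Adj y x}.ncard
            ≤ (Set.univ : Set V).ncard := Set.ncard_le_ncard (Set.subset_univ _) (Set.toFinite _)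
          _ = Fintype.card V := by rw [Set.ncard_univ, Nat.card_eq_fintype_card]
  have hmem := Nat.sInf_mem hne
  obtain ⟨H, hle, hkt⟩ := hmem
  exact ⟨H, hle, ktree_mono hkt h⟩

lemma layer_ktree {V : Type} [Fintype V] (H : SimpleGraph V) (r : V → V → Prop)
    (wf : WellFounded r) (hcl : ∀ x : V, H.IsClique (Bset H r x))
    (hto : IsStrictTotalOrder V r) {k : ℕ}
    (hcard : ∀ x : V, (Bset H r x).ncard ≤ k + 1) (a : ℕ) :
    IsKTree k (H.induce {v : V | gfn H r wf v = a}) := by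
  haveI := hto
  set La := {v : V | gfn H r wf v = a} with hLa
  refine ⟨fun x y => r x.1 y.1, ?_, ?_⟩
  · haveI h1 : IsTrichotomous ↥La (fun x y => r x.1 y.1) := ⟨fun x y h1 h2 =>
      Subtype.ext (((trichotomous_of r x.1 y.1).resolve_left h1).resolve_right h2)⟩
    haveI h2 : IsTrans ↥La (fun x y => r x.1 y.1) := ⟨fun x y z hxy hyz => _root_.trans hxy hyz⟩
    haveI h3 : IsIrrefl ↥La (fun x y => r x.1 y.1) := ⟨fun x => irrefl x.1⟩
    exact { }
  · intro x
    constructor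
    · intro p hp q hq hpq
      exact hcl x.1 ⟨hp.1, hp.2⟩ ⟨hq.1, hq.2⟩ (fun h => hpq (Subtype.ext h))
    · set Bx' := {y : ↥La | r y.1 x.1 ∧ (H.induce La).Adj y x} with hBx'
      rcases Set.eq_empty_or_nonempty (Bset H r x.1) with hB | hB
      · have hBe : Bx' = ∅ := by
          ext q
          simp only [Set.mem_empty_iff_false, iff_false]
          intro hq
          have : q.1 ∈ Bset H r x.1 := ⟨hq.1, hq.2⟩
          rw [hB] at this
          exact this
        rw [hBe]
        simp
      · obtain ⟨w, hw, hxw⟩ := exists_gfn_pred H r wf hB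
        have hwa : w ∉ La := by
          intro hwa
          have hxa : gfn H r wf x.1 = a := x.2
          have hwa' : gfn H r wf w = a := hwa
          omega
        have hsub2 : Subtype.val '' Bx' ⊆ Bset H r x.1 \ {w} := by
          rintro v ⟨q, hq, rfl⟩
          exact ⟨⟨hq.1, hq.2⟩, fun h => hwa (Set.mem_singleton_iff.mp h ▸ q.2)⟩
        calc Bx'.ncard = (Subtype.val '' Bx').ncard :=
              (Set.ncard_image_of_injective _ Subtype.val_injective).symm
          _ ≤ (Bset H r x.1 \ {w}).ncard := Set.ncard_le_ncard hsub2 (Set.toFinite _)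
          _ = (Bset H r x.1).ncard - 1 := Set.ncard_diff_singleton_of_mem hw
          _ ≤ k := by have := hcard x.1; omega

theorem lemA : ∀ (p t : ℕ), ∃ M : ℕ, 0 < M ∧ ∀ (V : Type) [Fintype V] (H : SimpleGraph V),
    IsKTree t H → ∃ d : V → Fin M, IsCenteredColoring p H d := by
  intro p t
  induction t with
  | zero =>
    refine ⟨1, one_pos, ?_⟩
    intro V _ H hkt
    refine ⟨fun _ => 0, ?_⟩
    intro S hS
    left
    obtain ⟨x0⟩ := hS.nonempty
    refine ⟨x0.1, x0.2, ?_⟩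
    intro y hy _
    obtain ⟨l, hc, hX, hh, hl⟩ := induce_reachable_chain H S (hS.preconnected ⟨y, hy⟩ x0)
    cases l with
    | nil => simp at hh
    | cons a tl =>
      cases tl with
      | nil =>
        have h1 : a = y := by simpa using hh
        have h2 : a = x0.1 := by simpa using hl
        rw [← h1, h2]
      | cons b tl' =>
        exact ((ktree_zero_no_edges hkt a b) (List.isChain_cons_cons.mp hc).1).elim
  | succ k IH =>
    obtain ⟨M', hM'pos, hIH⟩ := IH
    rcases Nat.eq_zero_or_pos p with hp0 | hp
    · refine ⟨1, one_pos, ?_⟩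
      intro V _ H _
      exact ⟨fun _ => 0, fun S _ => Or.inr (by omega)⟩
    refine ⟨p * M', by positivity, ?_⟩
    intro V _ H hkt
    obtain ⟨r, hto, hprop⟩ := hkt
    haveI := hto
    have wf : WellFounded r := Finite.wellFounded_of_trans_of_irrefl r
    have hcl : ∀ x, H.IsClique (Bset H r x) := fun x => (hprop x).1
    have hcard : ∀ x, (Bset H r x).ncard ≤ k + 1 := fun x => (hprop x).2
    have hIHlayers : ∀ a : ℕ, ∃ d : ↥{v : V | gfn H r wf v = a} → Fin M',
        IsCenteredColoring p (H.induce {v : V | gfn H r wf v = a}) d := by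
      intro a
      exact hIH ↥{v : V | gfn H r wf v = a} (H.induce _)
        (layer_ktree H r wf hcl hto hcard a)
    choose d hd using hIHlayers
    set c0 : V → Fin p × Fin M' :=
      fun v => (⟨gfn H r wf v % p, Nat.mod_lt _ hp⟩, d (gfn H r wf v) ⟨v, rfl⟩) with hc0
    have hdcast : ∀ (v : V) (a : ℕ) (h : gfn H r wf v = a),
        d (gfn H r wf v) ⟨v, rfl⟩ = d a ⟨v, h⟩ := by
      intro v a h
      subst h
      rfl
    have hcent : IsCenteredColoring p H c0 := by
      intro S hS
      obtain ⟨x0⟩ := hS.nonempty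
      have himgne : (gfn H r wf '' S).Nonempty := ⟨_, x0.1, x0.2, rfl⟩
      set a := sInf (gfn H r wf '' S) with ha
      obtain ⟨u, huS, hua⟩ := Nat.sInf_mem himgne
      have hmin : ∀ v ∈ S, a ≤ gfn H r wf v := fun v hv => Nat.sInf_le ⟨v, hv, rfl⟩
      by_cases hhigh : ∃ v ∈ S, a + (p - 1) ≤ gfn H r wf v
      · right
        obtain ⟨vh, hvhS, hvh⟩ := hhigh
        have hz : ∀ i : Fin p, ∃ z, z ∈ S ∧ gfn H r wf z = a + i := by
          intro i
          obtain ⟨l, hc, hX, hh, hl⟩ :=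
            induce_reachable_chain H S (hS.preconnected ⟨u, huS⟩ ⟨vh, hvhS⟩)
          obtain ⟨z, hzl, hzg⟩ := ivt H r wf hcl hto l u vh (a + i) hc hh hl
            (by omega) (by have hip : (i : ℕ) < p := i.2; omega)
          exact ⟨z, hX z hzl, hzg⟩
        choose z hzS hzg using hz
        have hinj : Function.Injective
            (fun i : Fin p => (⟨c0 (z i), Set.mem_image_of_mem _ (hzS i)⟩ : ↥(c0 '' S))) := by
          intro i j hij
          have h1 : c0 (z i) = c0 (z j) := congrArg Subtype.val hij
          have h2 : gfn H r wf (z i) % p = gfn H r wf (z j) % p := by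
            have := congrArg (fun q : Fin p × Fin M' => (q.1 : ℕ)) h1
            simpa using this
          rw [hzg i, hzg j] at h2
          apply Fin.ext
          rcases le_total (i : ℕ) (j : ℕ) with hle | hle
          · have hdvd := (Nat.modEq_iff_dvd' (by omega : a + (i:ℕ) ≤ a + (j:ℕ))).mp h2
            rcases Nat.eq_zero_or_pos ((a + (j:ℕ)) - (a + (i:ℕ))) with h0 | h0
            · omega
            · have := Nat.le_of_dvd h0 hdvd
              have hip : (i : ℕ) < p := i.2
              have hjp : (j : ℕ) < p := j.2
              omega
          · have hdvd := (Nat.modEq_iff_dvd' (by omega : a + (j:ℕ) ≤ a + (i:ℕ))).mp h2.symm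
            rcases Nat.eq_zero_or_pos ((a + (i:ℕ)) - (a + (j:ℕ))) with h0 | h0
            · omega
            · have := Nat.le_of_dvd h0 hdvd
              have hip : (i : ℕ) < p := i.2
              have hjp : (j : ℕ) < p := j.2
              omega
        have hcardle := Nat.card_le_card_of_injective _ hinj
        rw [Nat.card_eq_fintype_card, Fintype.card_fin] at hcardle
        rwa [Nat.card_coe_set_eq] at hcardle
      · push_neg at hhigh
        set T := S ∩ {v : V | gfn H r wf v = a} with hT
        set Sh : Set ↥{v : V | gfn H r wf v = a} := {x | x.1 ∈ T} with hSh
        have hTsub : T ⊆ {v : V | gfn H r wf v = a} := Set.inter_subset_right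
        have hTconn : (H.induce T).Connected := by
          rw [SimpleGraph.connected_iff]
          refine ⟨?_, ⟨⟨u, huS, hua⟩⟩⟩
          intro x y
          obtain ⟨l, hc, hX, hh, hl⟩ :=
            induce_reachable_chain H S (hS.preconnected ⟨x.1, x.2.1⟩ ⟨y.1, y.2.1⟩)
          have hgx : gfn H r wf x.1 = a := x.2.2
          have hgy : gfn H r wf y.1 = a := y.2.2
          obtain ⟨l', hc', hh', hl', hm'⟩ := excursion H r wf hcl hto l.length l x.1 y.1
            le_rfl hc hh hl (fun v hv => by rw [hgx]; exact hmin v (hX v hv))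
            (by rw [hgx, hgy])
          exact chain_induce_reachable H T l' x.1 y.1 hc'
            (fun v hv => ⟨hX v (hm' v hv).1, by rw [Set.mem_setOf_eq, (hm' v hv).2, hgx]⟩)
            hh' hl' x.2 y.2
        have hShconn : ((H.induce {v : V | gfn H r wf v = a}).induce Sh).Connected :=
          iso_connected (induceInduceIso H {v : V | gfn H r wf v = a} T hTsub) hTconn
        rcases hd a Sh hShconn with ⟨xh, hxh, hxhu⟩ | hbig
        · left
          refine ⟨xh.1, hxh.1, ?_⟩
          intro y hy hcy
          have hgx : gfn H r wf xh.1 = a := xh.2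
          have h1 : gfn H r wf y % p = gfn H r wf xh.1 % p := by
            have := congrArg (fun q : Fin p × Fin M' => (q.1 : ℕ)) hcy
            simpa using this
          have hya : gfn H r wf y = a := by
            have hy1 : a ≤ gfn H r wf y := hmin y hy
            have hy2 : gfn H r wf y < a + (p - 1) := hhigh y hy
            rw [hgx] at h1
            have hmod : a ≡ gfn H r wf y [MOD p] := (Nat.ModEq.symm h1)
            have hdvd := (Nat.modEq_iff_dvd' hy1).mp hmod
            rcases Nat.eq_zero_or_pos (gfn H r wf y - a) with h0 | h0
            · omega
            · have := Nat.le_of_dvd h0 hdvd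
              omega
          have h2 : d (gfn H r wf y) ⟨y, rfl⟩ = d (gfn H r wf xh.1) ⟨xh.1, rfl⟩ :=
            congrArg Prod.snd hcy
          rw [hdcast y a hya, hdcast xh.1 a hgx] at h2
          have hyS : (⟨y, hya⟩ : ↥{v : V | gfn H r wf v = a}) ∈ Sh := ⟨hy, hya⟩
          have := hxhu ⟨y, hya⟩ hyS h2
          exact congrArg Subtype.val this
        · right
          have hsub : (d a) '' Sh ⊆ Prod.snd '' (c0 '' S) := by
            rintro κ ⟨xh, hxh, rfl⟩
            refine ⟨c0 xh.1, Set.mem_image_of_mem _ hxh.1, ?_⟩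
            show d (gfn H r wf xh.1) ⟨xh.1, rfl⟩ = d a xh
            rw [hdcast xh.1 a xh.2]
          calc p ≤ ((d a) '' Sh).ncard := hbig
            _ ≤ (Prod.snd '' (c0 '' S)).ncard := Set.ncard_le_ncard hsub (Set.toFinite _)
            _ ≤ (c0 '' S).ncard := Set.ncard_image_le (Set.toFinite _)
    exact ⟨fun v => finProdFinEquiv (c0 v), centered_comp _ finProdFinEquiv.injective hcent⟩


end CentAux

/-- A class with low tree-width colorings has bounded `p`-centered colorings. -/
theorem stmt5 (C : GraphClass) (h : HasLowTreeWidthColorings C) (p : ℕ) :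
    ∃ X : ℕ, ∀ (V : Type) [Fintype V], ∀ G : SimpleGraph V, C V G →
      ∃ c : V → Fin X, IsCenteredColoring p G c := by
  by_cases hp1 : p ≤ 1
  · refine ⟨1, ?_⟩
    intro V _ G _
    refine ⟨fun _ => 0, ?_⟩
    intro S hS
    right
    obtain ⟨x0⟩ := hS.nonempty
    have hSne : S.Nonempty := ⟨x0.1, x0.2⟩
    have hpos := (Set.ncard_pos (Set.toFinite _)).mpr (hSne.image (fun _ => (0 : Fin 1)))
    omega
  · push_neg at hp1
    obtain ⟨N, hN⟩ := h (p - 1) (by omega)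
    obtain ⟨M, hMpos, hMspec⟩ := CentAux.lemA p (p - 2)
    refine ⟨Fintype.card (Fin N × (Finset (Fin N) → Fin M)), ?_⟩
    intro V _ G hG
    obtain ⟨c, hc⟩ := hN V G hG
    have hDex : ∀ (I : Finset (Fin N)) (K : (G.induce {v | c v ∈ I}).ConnectedComponent),
        ∃ dk : ↥K.supp → Fin M,
          I.card ≤ p - 1 → IsCenteredColoring p ((G.induce {v | c v ∈ I}).induce K.supp) dk := by
      intro I K
      by_cases hI : I.card ≤ p - 1
      · have htw := hc I hI K
        have htw2 : treeWidth ((G.induce {v | c v ∈ I}).induce K.supp) ≤ p - 2 :=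
          le_trans htw (by omega)
        obtain ⟨H', hle, hkt⟩ := CentAux.tw_witness _ htw2
        obtain ⟨dk, hdk⟩ := hMspec _ H' hkt
        exact ⟨dk, fun _ => CentAux.centered_mono hle hdk⟩
      · exact ⟨fun _ => ⟨0, hMpos⟩, fun hI2 => absurd hI2 hI⟩
    choose D hD using hDex
    set cfin : V → Fin N × (Finset (Fin N) → Fin M) := fun v =>
      (c v, fun I => if h : c v ∈ I then
        D I ((G.induce {v | c v ∈ I}).connectedComponentMk ⟨v, h⟩) ⟨⟨v, h⟩, rfl⟩
        else ⟨0, hMpos⟩) with hcfin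
    have hDcast : ∀ (I : Finset (Fin N)) (x : ↥{v | c v ∈ I})
        (K : (G.induce {v | c v ∈ I}).ConnectedComponent)
        (hK : (G.induce {v | c v ∈ I}).connectedComponentMk x = K)
        (hx : x ∈ K.supp),
        D I ((G.induce {v | c v ∈ I}).connectedComponentMk x) ⟨x, rfl⟩ = D I K ⟨x, hx⟩ := by
      intro I x K hK hx
      subst hK
      rfl
    have hcent : IsCenteredColoring p G cfin := by
      intro S hS
      by_cases hbig : p ≤ (cfin '' S).ncard
      · exact Or.inr hbig
      obtain ⟨x0s⟩ := hS.nonempty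
      have hSne : S.Nonempty := ⟨x0s.1, x0s.2⟩
      set I₀ : Finset (Fin N) := (Set.toFinite (c '' S)).toFinset with hI₀def
      have hmemI₀ : ∀ v ∈ S, c v ∈ I₀ := by
        intro v hv
        rw [hI₀def, Set.Finite.mem_toFinset]
        exact ⟨v, hv, rfl⟩
      have hfst : c '' S = Prod.fst '' (cfin '' S) := by
        rw [Set.image_image]
      have hI₀card : I₀.card ≤ p - 1 := by
        have h1 : (c '' S).ncard = I₀.card := Set.ncard_eq_toFinset_card _ _
        have h2 : (c '' S).ncard ≤ (cfin '' S).ncard := by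
          rw [hfst]
          exact Set.ncard_image_le (Set.toFinite _)
        omega
      set A := {v : V | c v ∈ I₀} with hA
      have hSA : S ⊆ A := fun v hv => hmemI₀ v hv
      set GI := G.induce A with hGI
      set K := GI.connectedComponentMk ⟨x0s.1, hSA x0s.2⟩ with hK
      have hSK : ∀ (v : V) (hv : v ∈ S), GI.connectedComponentMk ⟨v, hSA hv⟩ = K := by
        intro v hv
        obtain ⟨l, hcl', hX, hh, hl⟩ := CentAux.induce_reachable_chain G S
          (hS.preconnected ⟨v, hv⟩ x0s)
        exact SimpleGraph.ConnectedComponent.sound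
          (CentAux.chain_induce_reachable G A l v x0s.1 hcl'
            (fun q hq => hSA (hX q hq)) hh hl (hSA hv) (hSA x0s.2))
      set S₁ : Set ↥A := {x | x.1 ∈ S} with hS₁
      have hS₁K : S₁ ⊆ K.supp := by
        intro x hx
        rw [SimpleGraph.ConnectedComponent.mem_supp_iff]
        have heq : (⟨x.1, hSA hx⟩ : ↥A) = x := Subtype.ext rfl
        rw [← heq]
        exact hSK x.1 hx
      have hsupp : ∀ (v : V) (hv : v ∈ S), (⟨v, hSA hv⟩ : ↥A) ∈ K.supp := by
        intro v hv
        rw [SimpleGraph.ConnectedComponent.mem_supp_iff]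
        exact hSK v hv
      have hval : ∀ (v : V) (hv : v ∈ S),
          (cfin v).2 I₀ = D I₀ K ⟨⟨v, hSA hv⟩, hsupp v hv⟩ := by
        intro v hv
        show (if h : c v ∈ I₀ then
          D I₀ ((G.induce {u | c u ∈ I₀}).connectedComponentMk ⟨v, h⟩) ⟨⟨v, h⟩, rfl⟩
          else ⟨0, hMpos⟩) = _
        rw [dif_pos (hmemI₀ v hv)]
        exact hDcast I₀ ⟨v, hmemI₀ v hv⟩ K (hSK v hv) (hsupp v hv)
      have hconn1 : (GI.induce S₁).Connected :=
        CentAux.iso_connected (CentAux.induceInduceIso G A S hSA) hS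
      have hconn2 : ((GI.induce K.supp).induce {z : ↥K.supp | z.1 ∈ S₁}).Connected :=
        CentAux.iso_connected (CentAux.induceInduceIso GI K.supp S₁ hS₁K) hconn1
      rcases hD I₀ K hI₀card {z : ↥K.supp | z.1 ∈ S₁} hconn2 with ⟨zh, hzh, hzhu⟩ | hbig2
      · left
        refine ⟨zh.1.1, hzh, ?_⟩
        intro y hy hcy
        have h2 : (cfin y).2 I₀ = (cfin zh.1.1).2 I₀ :=
          congrArg (fun q : Fin N × (Finset (Fin N) → Fin M) => q.2 I₀) hcy
        rw [hval y hy, hval zh.1.1 hzh] at h2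
        have hzeq : (⟨⟨zh.1.1, hSA hzh⟩, hsupp zh.1.1 hzh⟩ : ↥K.supp) = zh :=
          Subtype.ext (Subtype.ext rfl)
        rw [hzeq] at h2
        have := hzhu ⟨⟨y, hSA hy⟩, hsupp y hy⟩ hy h2
        exact congrArg (fun t : ↥K.supp => t.1.1) this
      · exfalso
        apply hbig
        have hsub : D I₀ K '' {z : ↥K.supp | z.1 ∈ S₁} ⊆
            (fun q : Fin N × (Finset (Fin N) → Fin M) => q.2 I₀) '' (cfin '' S) := by
          rintro κ ⟨zz, hzz, rfl⟩
          refine ⟨cfin zz.1.1, Set.mem_image_of_mem _ hzz, ?_⟩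
          show (cfin zz.1.1).2 I₀ = D I₀ K zz
          rw [hval zz.1.1 hzz]
        calc p ≤ _ := hbig2
          _ ≤ ((fun q : Fin N × (Finset (Fin N) → Fin M) => q.2 I₀) '' (cfin '' S)).ncard :=
            Set.ncard_le_ncard hsub (Set.toFinite _)
          _ ≤ (cfin '' S).ncard := Set.ncard_image_le (Set.toFinite _)
    exact ⟨fun v => (Fintype.equivFin _) (cfin v),
      CentAux.centered_comp _ (Fintype.equivFin _).injective hcent⟩
end

section
/- If a class C of graphs has low tree-width colorings, then C has bounded expansion. -/
open scoped Classical

universe u v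

-- ========== auxiliary lemmas ==========


/-- ncard of a set covered by a finite-indexed union is at most the sum. -/
lemma ncard_le_sum_of_subset_biUnion {α ι : Type*} [Fintype α] (t : Finset ι)
    (f : ι → Set α) (s : Set α) (h : s ⊆ ⋃ i ∈ t, f i) :
    s.ncard ≤ ∑ i ∈ t, (f i).ncard := by
  classical
  induction t using Finset.induction_on generalizing s with
  | empty => simp at h; simp [h]
  | insert a T hx ih =>
    rw [Finset.sum_insert hx]
    have hsub : s ⊆ f a ∪ ⋃ i ∈ T, f i := by
      intro z hz
      have := h hz
      simp only [Set.mem_iUnion, Finset.mem_insert] at this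
      obtain ⟨i, hi, hzi⟩ := this
      rcases hi with rfl | hi
      · exact Or.inl hzi
      · exact Or.inr (Set.mem_iUnion₂.2 ⟨i, hi, hzi⟩)
    calc s.ncard ≤ ((f a) ∪ ⋃ i ∈ T, f i).ncard := Set.ncard_le_ncard hsub (Set.toFinite _)
      _ ≤ (f a).ncard + (⋃ i ∈ T, f i).ncard := Set.ncard_union_le _ _
      _ ≤ (f a).ncard + ∑ i ∈ T, (f i).ncard := by
          exact Nat.add_le_add_left (ih _ (fun z hz => hz)) _

/-- walk with support inside D gives reachability in the induced graph. -/
lemma reach_of_walk_subset {V : Type*} {G : SimpleGraph V} {a b : V} (W : G.Walk a b)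
    (D : Set V) (hW : ∀ v ∈ W.support, v ∈ D) (ha : a ∈ D) (hb : b ∈ D) :
    (G.induce D).Reachable ⟨a, ha⟩ ⟨b, hb⟩ := by
  induction W with
  | nil => rfl
  | @cons u v w h q ih =>
    have hv : v ∈ D := hW v (by simp [SimpleGraph.Walk.support_cons])
    have step : (G.induce D).Adj ⟨u, ha⟩ ⟨v, hv⟩ := h
    exact step.reachable.trans (ih (fun z hz => hW z (by simp [SimpleGraph.Walk.support_cons, hz])) hv hb)

/-- existence of a maximum for a strict total order on a nonempty finset. -/
lemma exists_sto_max {V : Type*} (rr : V → V → Prop) (hsto : IsStrictTotalOrder V rr)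
    (S : Finset V) (hS : S.Nonempty) : ∃ w ∈ S, ∀ x ∈ S, x ≠ w → rr x w := by
  classical
  induction S using Finset.induction_on with
  | empty => simp at hS
  | insert a T hx ih =>
    by_cases hT : T.Nonempty
    · obtain ⟨w, hw, hmax⟩ := ih hT
      have haw : a ≠ w := fun h => hx (h ▸ hw)
      rcases (show rr a w ∨ a = w ∨ rr w a by have := hsto.trichotomous a w; tauto) with h | h | h
      · exact ⟨w, Finset.mem_insert_of_mem hw, by
          intro x hxm hxw
          rcases Finset.mem_insert.1 hxm with rfl | hxT
          · exact h
          · exact hmax x hxT hxw⟩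
      · exact absurd h haw
      · refine ⟨a, Finset.mem_insert_self _ _, ?_⟩
        intro x hxm hxa
        rcases Finset.mem_insert.1 hxm with rfl | hxT
        · exact absurd rfl hxa
        · by_cases hxw : x = w
          · exact hxw ▸ h
          · exact hsto.trans _ _ _ (hmax x hxT hxw) h
    · refine ⟨a, Finset.mem_insert_self _ _, ?_⟩
      intro x hxm hxa
      rcases Finset.mem_insert.1 hxm with rfl | hxT
      · exact absurd rfl hxa
      · exact absurd ⟨x, hxT⟩ hT



lemma empty_preconnected {V : Type*} (G : SimpleGraph V) :
    (G.induce (∅ : Set V)).Preconnected := fun u => absurd u.2 (Set.notMem_empty _)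

/-- Removing a simplicial-ish vertex (whose neighborhood restricted to A is a clique)
keeps the induced graph preconnected. -/
lemma reroute {V : Type*} (K : SimpleGraph V) (A : Set V) (w : V)
    (hclique : ∀ a b, a ∈ A → b ∈ A → K.Adj a w → K.Adj b w → a ≠ b → K.Adj a b)
    (hconn : (K.induce A).Preconnected) :
    (K.induce (A \ {w})).Preconnected := by
  classical
  -- key claim: walks in induce A from a non-w vertex to a non-w vertex can be rerouted
  have main : ∀ n (a b : V) (ha : a ∈ A) (hb : b ∈ A) (haw : a ≠ w) (hbw : b ≠ w)
      (W : (K.induce A).Walk ⟨a, ha⟩ ⟨b, hb⟩), W.length ≤ n →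
      (K.induce (A \ {w})).Reachable ⟨a, ⟨ha, haw⟩⟩ ⟨b, ⟨hb, hbw⟩⟩ := by
    intro n
    induction n with
    | zero =>
      intro a b ha hb haw hbw W hW
      have : (⟨a, ha⟩ : ↥A) = ⟨b, hb⟩ := by
        cases W with
        | nil => rfl
        | cons h q => simp [SimpleGraph.Walk.length_cons] at hW
      have hab : a = b := congrArg Subtype.val this
      subst hab
      rfl
    | succ n ih =>
      intro a b ha hb haw hbw W hW
      cases W with
      | nil => rfl
      | @cons _ c _ h q =>
        by_cases hcw : (c : V) = w
        · -- next vertex is w; look two steps ahead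
          cases q with
          | nil =>
            exact absurd hcw hbw
          | @cons _ d _ h2 q2 =>
            have hdw : (d : V) ≠ w := by
              intro hdww
              have : K.Adj (c : V) (d : V) := h2
              rw [hcw, hdww] at this
              exact this.ne rfl
            have hKaw : K.Adj a w := hcw ▸ (h : K.Adj a c)
            have hKdw : K.Adj (d : V) w := hcw ▸ ((h2 : K.Adj c d).symm : K.Adj d c)
            by_cases had : a = (d : V)
            · -- skip over w entirely
              have := ih (d : V) b d.2 hb hdw hbw q2 (by
                have := hW
                simp [SimpleGraph.Walk.length_cons] at this
                omega)
              exact had ▸ this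
            · have hKad : K.Adj a (d : V) := hclique a d ha d.2 hKaw hKdw had
              have step : (K.induce (A \ {w})).Adj ⟨a, ⟨ha, haw⟩⟩ ⟨(d : V), ⟨d.2, hdw⟩⟩ := hKad
              refine step.reachable.trans ?_
              exact ih (d : V) b d.2 hb hdw hbw q2 (by
                have := hW
                simp [SimpleGraph.Walk.length_cons] at this
                omega)
        · have step : (K.induce (A \ {w})).Adj ⟨a, ⟨ha, haw⟩⟩ ⟨(c : V), ⟨c.2, hcw⟩⟩ := h
          refine step.reachable.trans ?_
          exact ih (c : V) b c.2 hb hcw hbw q (by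
            simp [SimpleGraph.Walk.length_cons] at hW
            omega)
  rintro ⟨a, ha, haw⟩ ⟨b, hb, hbw⟩
  obtain ⟨W⟩ := hconn ⟨a, ha⟩ ⟨b, hb⟩
  exact main W.length a b ha hb haw hbw W le_rfl

lemma reach_mono_sets {V : Type} {G : SimpleGraph V} {D U : Set V} (hDU : D ⊆ U)
    (x y : ↥D) (h : (G.induce D).Reachable x y) :
    (G.induce U).Reachable ⟨x.1, hDU x.2⟩ ⟨y.1, hDU y.2⟩ := by
  obtain ⟨W⟩ := h
  induction W with
  | nil => rfl
  | @cons a b w hab q ih =>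
    have step : (G.induce U).Adj ⟨a.1, hDU a.2⟩ ⟨b.1, hDU b.2⟩ := hab
    exact step.reachable.trans ih

lemma lemB {V : Type} [Fintype V] (k : ℕ) (KK : SimpleGraph V)
    (rr : V → V → Prop) (hsto : IsStrictTotalOrder V rr) (S : Finset V) :
    ∀ (_ : ∀ x ∈ S, KK.IsClique {y | y ∈ S ∧ rr y x ∧ KK.Adj y x} ∧
      {y | y ∈ S ∧ rr y x ∧ KK.Adj y x}.ncard ≤ k)
    {P : ℕ} (B : Fin P → Set V)
    (_ : ∀ i, B i ⊆ (S : Set V))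
    (_ : Pairwise fun i j => Disjoint (B i) (B j))
    (_ : ∀ i, (KK.induce (B i)).Preconnected)
    (M : SimpleGraph (Fin P))
    (_ : ∀ i j, M.Adj i j → ∃ u ∈ B i, ∃ v ∈ B j, KK.Adj u v),
    M.edgeSet.ncard ≤ k * {i | (B i).Nonempty}.ncard := by
  induction S using Finset.strongInduction with
  | _ S ih =>
  intro hS P B hsub hdisj hconn M hM
  rcases S.eq_empty_or_nonempty with rfl | hSne
  · have hempty : M.edgeSet = ∅ := by
      ext e
      refine ⟨?_, fun h => absurd h (Set.notMem_empty _)⟩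
      induction e with
      | _ i i' =>
        intro he
        obtain ⟨u, hu, -⟩ := hM i i' he
        exact absurd (hsub i hu) (by simp)
    simp [hempty]
  obtain ⟨w, hwS, hwmax⟩ := exists_sto_max rr hsto S hSne
  have hssub : S.erase w ⊂ S := Finset.erase_ssubset hwS
  have hS' : ∀ x ∈ S.erase w, KK.IsClique {y | y ∈ S.erase w ∧ rr y x ∧ KK.Adj y x} ∧
      {y | y ∈ S.erase w ∧ rr y x ∧ KK.Adj y x}.ncard ≤ k := by
    intro x hx
    have hxS : x ∈ S := Finset.mem_of_mem_erase hx
    have hsubset : {y | y ∈ S.erase w ∧ rr y x ∧ KK.Adj y x} ⊆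
        {y | y ∈ S ∧ rr y x ∧ KK.Adj y x} :=
      fun y hy => ⟨Finset.mem_of_mem_erase hy.1, hy.2⟩
    exact ⟨(hS x hxS).1.subset hsubset,
      le_trans (Set.ncard_le_ncard hsubset (Set.toFinite _)) (hS x hxS).2⟩
  have hQw := hS w hwS
  set Qw : Set V := {y | y ∈ S ∧ rr y w ∧ KK.Adj y w} with hQwdef
  have hmemQ : ∀ y, y ∈ (S : Set V) → y ≠ w → KK.Adj y w → y ∈ Qw :=
    fun y hy hne ha => ⟨hy, hwmax y hy hne, ha⟩
  by_cases hwB : ∃ j, w ∈ B j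
  swap
  · push_neg at hwB
    refine ih (S.erase w) hssub hS' B (fun i u hu => ?_) hdisj hconn M hM
    have huS := hsub i hu
    have huw : u ≠ w := fun h => hwB i (h ▸ hu)
    simp only [Finset.coe_erase, Set.mem_diff, Set.mem_singleton_iff]
    exact ⟨huS, huw⟩
  obtain ⟨j, hwj⟩ := hwB
  have hwnotB : ∀ i, i ≠ j → w ∉ B i := by
    intro i hij hwi
    exact Set.disjoint_left.1 (hdisj hij) hwi hwj
  by_cases hBj2 : ∃ z ∈ B j, z ≠ w
  · -- B j has another vertex
    obtain ⟨z, hzB, hzw⟩ := hBj2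
    have hz0 : ∃ z0 ∈ B j, z0 ≠ w ∧ KK.Adj w z0 := by
      obtain ⟨W⟩ := hconn j ⟨w, hwj⟩ ⟨z, hzB⟩
      cases W with
      | nil => exact absurd rfl hzw
      | @cons _ c _ h q =>
        have hadj : KK.Adj w (c : V) := h
        exact ⟨c, c.2, fun hc => hadj.ne' hc, hadj⟩
    obtain ⟨z0, hz0B, hz0w, hwz0⟩ := hz0
    set B' : Fin P → Set V := fun i => if i = j then B j \ {w} else B i with hB'def
    have hB'j : B' j = B j \ {w} := by simp [hB'def]
    have hB'ne : ∀ i, i ≠ j → B' i = B i := fun i hij => by simp [hB'def, hij]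
    have hB'sub : ∀ i, B' i ⊆ B i := by
      intro i
      by_cases hij : i = j
      · rw [hij, hB'j]; exact Set.diff_subset
      · rw [hB'ne i hij]
    have hsub' : ∀ i, B' i ⊆ ((S.erase w : Finset V) : Set V) := by
      intro i u hu
      have huB : u ∈ B i := hB'sub i hu
      have huw : u ≠ w := by
        by_cases hij : i = j
        · rw [hij, hB'j] at hu; exact hu.2
        · exact fun h => hwnotB i hij (h ▸ huB)
      simp only [Finset.coe_erase, Set.mem_diff, Set.mem_singleton_iff]
      exact ⟨hsub i huB, huw⟩
    have hdisj' : Pairwise fun i j' => Disjoint (B' i) (B' j') :=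
      fun i j' hij => Set.disjoint_of_subset (hB'sub i) (hB'sub j') (hdisj hij)
    have hconn' : ∀ i, (KK.induce (B' i)).Preconnected := by
      intro i
      by_cases hij : i = j
      · rw [hij, hB'j]
        refine reroute KK (B j) w ?_ (hconn j)
        intro a b haB hbB haw hbw hab
        exact hQw.1 (hmemQ a (hsub j haB) haw.ne haw) (hmemQ b (hsub j hbB) hbw.ne hbw) hab
      · rw [hB'ne i hij]; exact hconn i
    have hM'half : ∀ i i', M.Adj i i' → i ≠ j → ∃ u ∈ B' i, ∃ v ∈ B' i', KK.Adj u v := by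
      intro i i' hadj hij
      obtain ⟨u, hu, v, hv, huv⟩ := hM i i' hadj
      have hBu : u ∈ B' i := (hB'ne i hij) ▸ hu
      by_cases hi' : i' = j
      · by_cases hvw : v = w
        · have huw : u ≠ w := fun h => hwnotB i hij (h ▸ hu)
          have huz0 : u ≠ z0 := fun h =>
            Set.disjoint_left.1 (hdisj (show i ≠ j from hij)) hu (h ▸ hz0B)
          have huQ : u ∈ Qw := hmemQ u (hsub i hu) huw (hvw ▸ huv)
          have hz0Q : z0 ∈ Qw := hmemQ z0 (hsub j hz0B) hz0w hwz0.symm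
          have hadj2 : KK.Adj u z0 := hQw.1 huQ hz0Q huz0
          refine ⟨u, hBu, z0, ?_, hadj2⟩
          rw [hi', hB'j]; exact ⟨hz0B, hz0w⟩
        · refine ⟨u, hBu, v, ?_, huv⟩
          rw [hi', hB'j]; exact ⟨hi' ▸ hv, hvw⟩
      · exact ⟨u, hBu, v, (hB'ne i' hi') ▸ hv, huv⟩
    have hM' : ∀ i i', M.Adj i i' → ∃ u ∈ B' i, ∃ v ∈ B' i', KK.Adj u v := by
      intro i i' hadj
      by_cases hij : i = j
      · have hi'j : i' ≠ j := fun h => hadj.ne (hij.trans h.symm)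
        obtain ⟨u, hu, v, hv, huv⟩ := hM'half i' i hadj.symm hi'j
        exact ⟨v, hv, u, hu, huv.symm⟩
      · exact hM'half i i' hadj hij
    have hne' : {i | (B' i).Nonempty} = {i | (B i).Nonempty} := by
      ext i
      by_cases hij : i = j
      · subst hij
        simp only [Set.mem_setOf_eq, hB'j]
        exact ⟨fun _ => ⟨w, hwj⟩, fun _ => ⟨z0, hz0B, hz0w⟩⟩
      · simp [hB'ne i hij]
    have := ih (S.erase w) hssub hS' B' hsub' hdisj' hconn' M hM'
    rwa [hne'] at this
  · -- B j = {w}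
    push_neg at hBj2
    have hBj : B j = {w} :=
      subset_antisymm (fun z hz => hBj2 z hz) (fun z hz => by simpa using hz ▸ hwj)
    set B' : Fin P → Set V := fun i => if i = j then (∅ : Set V) else B i with hB'def
    have hB'j : B' j = (∅ : Set V) := by simp [hB'def]
    have hB'ne : ∀ i, i ≠ j → B' i = B i := fun i hij => by simp [hB'def, hij]
    set M' : SimpleGraph (Fin P) :=
      { Adj := fun i i' => M.Adj i i' ∧ i ≠ j ∧ i' ≠ j
        symm := ⟨fun i i' h => ⟨h.1.symm, h.2.2, h.2.1⟩⟩
        loopless := ⟨fun i h => M.loopless.irrefl i h.1⟩ } with hM'def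
    have hB'sub : ∀ i, B' i ⊆ B i := by
      intro i
      by_cases hij : i = j
      · rw [hij, hB'j]; exact Set.empty_subset _
      · rw [hB'ne i hij]
    have hsub' : ∀ i, B' i ⊆ ((S.erase w : Finset V) : Set V) := by
      intro i u hu
      by_cases hij : i = j
      · rw [hij, hB'j] at hu; exact absurd hu (Set.notMem_empty _)
      · have huB : u ∈ B i := hB'sub i hu
        simp only [Finset.coe_erase, Set.mem_diff, Set.mem_singleton_iff]
        exact ⟨hsub i huB, fun h => hwnotB i hij (h ▸ huB)⟩
    have hdisj' : Pairwise fun i j' => Disjoint (B' i) (B' j') :=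
      fun i j' hij => Set.disjoint_of_subset (hB'sub i) (hB'sub j') (hdisj hij)
    have hconn' : ∀ i, (KK.induce (B' i)).Preconnected := by
      intro i
      by_cases hij : i = j
      · rw [hij, hB'j]; exact empty_preconnected KK
      · rw [hB'ne i hij]; exact hconn i
    have hM'r : ∀ i i', M'.Adj i i' → ∃ u ∈ B' i, ∃ v ∈ B' i', KK.Adj u v := by
      intro i i' hadj
      obtain ⟨hMadj, hij, hi'j⟩ := hadj
      obtain ⟨u, hu, v, hv, huv⟩ := hM i i' hMadj
      exact ⟨u, (hB'ne i hij) ▸ hu, v, (hB'ne i' hi'j) ▸ hv, huv⟩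
    have IH := ih (S.erase w) hssub hS' B' hsub' hdisj' hconn' M' hM'r
    have hsplit : M.edgeSet ⊆ M'.edgeSet ∪ ((fun i => s(i, j)) '' {i | M.Adj i j}) := by
      intro e he
      induction e with
      | _ a b =>
        have hab : M.Adj a b := he
        by_cases haj : a = j
        · exact Or.inr ⟨b, by rw [← haj]; exact hab.symm, by rw [haj, Sym2.eq_swap]⟩
        · by_cases hbj : b = j
          · exact Or.inr ⟨a, by rw [← hbj]; exact hab, by rw [hbj]⟩
          · exact Or.inl (show M'.Adj a b from ⟨hab, haj, hbj⟩)
    have hcard1 : M.edgeSet.ncard ≤ M'.edgeSet.ncard +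
        ((fun i => s(i, j)) '' {i | M.Adj i j}).ncard :=
      le_trans (Set.ncard_le_ncard hsplit (Set.toFinite _)) (Set.ncard_union_le _ _)
    have hdegj : {i | M.Adj i j}.ncard ≤ k := by
      set f : Fin P → V := fun i => if h : M.Adj i j then (hM i j h).choose else w with hfdef
      have hfmem : ∀ i (h : M.Adj i j), f i ∈ B i ∧ KK.Adj (f i) w := by
        intro i h
        obtain ⟨hu, v, hv, huv⟩ := (hM i j h).choose_spec
        have hvw : v = w := by rw [hBj] at hv; exact hv
        have : f i = (hM i j h).choose := by simp [hfdef, h]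
        rw [this]
        exact ⟨hu, hvw ▸ huv⟩
      have hmaps : ∀ i ∈ {i | M.Adj i j}, f i ∈ Qw := by
        intro i hi
        have hi' : M.Adj i j := hi
        obtain ⟨h1, h2⟩ := hfmem i hi'
        exact hmemQ _ (hsub i h1) (fun h => hwnotB i hi'.ne (h ▸ h1)) h2
      have hinj : Set.InjOn f {i | M.Adj i j} := by
        intro i hi i' hi' hfe
        by_contra hne
        have h1 := (hfmem i hi).1
        have h2 := (hfmem i' hi').1
        exact Set.disjoint_left.1 (hdisj hne) h1 (hfe ▸ h2)
      exact le_trans (Set.ncard_le_ncard_of_injOn f hmaps hinj (Set.toFinite _)) hQw.2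
    have hcardj : ((fun i => s(i, j)) '' {i | M.Adj i j}).ncard ≤ k :=
      le_trans (Set.ncard_image_le (Set.toFinite _)) hdegj
    have hjne : j ∈ {i | (B i).Nonempty} := ⟨w, hwj⟩
    have hne' : {i | (B' i).Nonempty} = {i | (B i).Nonempty} \ {j} := by
      ext i
      by_cases hij : i = j
      · subst hij; simp [hB'j]
      · simp [hB'ne i hij, hij]
    have hm : {i | (B' i).Nonempty}.ncard = {i | (B i).Nonempty}.ncard - 1 := by
      rw [hne']
      exact Set.ncard_diff_singleton_of_mem hjne
    have hmpos : 0 < {i | (B i).Nonempty}.ncard :=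
      (Set.ncard_pos (Set.toFinite _)).2 ⟨j, hjne⟩
    calc M.edgeSet.ncard ≤ M'.edgeSet.ncard + k := le_trans hcard1 (Nat.add_le_add_left hcardj _)
      _ ≤ k * ({i | (B i).Nonempty}.ncard - 1) + k := by
          rw [← hm]; exact Nat.add_le_add_right IH _
      _ = k * ({i | (B i).Nonempty}.ncard - 1 + 1) := by rw [Nat.mul_add, Nat.mul_one]
      _ = k * {i | (B i).Nonempty}.ncard := by
          congr 1
          omega

lemma sto_of_rank {V : Type*} (f : V → ℕ) (hf : Function.Injective f) :
    IsStrictTotalOrder V (fun a b => f a < f b) := by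
  haveI h1 : IsTrichotomous V (fun a b => f a < f b) := ⟨by
    intro a b h1 h2
    exact hf (by omega)⟩
  haveI h2 : IsIrrefl V (fun a b => f a < f b) := ⟨fun a => lt_irrefl _⟩
  haveI h3 : IsTrans V (fun a b => f a < f b) := ⟨fun a b c hab hbc => lt_trans hab hbc⟩
  haveI h4 : IsStrictOrder V (fun a b => f a < f b) := {}
  exact {}

lemma treeWidth_isKTree {W : Type} [Fintype W] (X : SimpleGraph W) :
    ∃ H : SimpleGraph W, X ≤ H ∧ IsKTree (treeWidth X) H := by
  have hne : (Fintype.card W : ℕ) ∈ {k : ℕ | ∃ H : SimpleGraph W, X ≤ H ∧ IsKTree k H} := by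
    refine ⟨⊤, le_top, ?_⟩
    set e := Fintype.equivFin W
    refine ⟨fun a b => (e a : ℕ) < (e b : ℕ), sto_of_rank _ (fun a b h => e.injective (Fin.ext (by simpa using h))), ?_⟩
    intro x
    constructor
    · intro y hy z hz hyz
      exact hyz
    · refine le_trans (Set.ncard_le_ncard (Set.subset_univ _) Set.finite_univ) ?_
      simp [Set.ncard_univ]
  exact Nat.sInf_mem ⟨_, hne⟩

lemma isKTree_mono {W : Type*} {k k' : ℕ} {H : SimpleGraph W} (h : IsKTree k H) (hkk : k ≤ k') :
    IsKTree k' H := by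
  obtain ⟨r, hr, hc⟩ := h
  exact ⟨r, hr, fun x => ⟨(hc x).1, le_trans (hc x).2 hkk⟩⟩

/-- Transport a `k`-tree covering `X` (on `W`) through an embedding `φ : W ↪ V`. -/
lemma ambientKTree {V W : Type} [Fintype V] [Fintype W] (φ : W ↪ V)
    (X H : SimpleGraph W) (hXH : X ≤ H) (k : ℕ) (hH : IsKTree k H) :
    ∃ (KK : SimpleGraph V) (rr : V → V → Prop), IsStrictTotalOrder V rr ∧
      (∀ a b, X.Adj a b → KK.Adj (φ a) (φ b)) ∧
      (∀ x ∈ Set.range φ, KK.IsClique {y | y ∈ Set.range φ ∧ rr y x ∧ KK.Adj y x} ∧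
        {y | y ∈ Set.range φ ∧ rr y x ∧ KK.Adj y x}.ncard ≤ k) := by
  classical
  obtain ⟨rh, hrh, hcl⟩ := hH
  set KK : SimpleGraph V :=
    { Adj := fun u v => ∃ a b, φ a = u ∧ φ b = v ∧ H.Adj a b
      symm := by
        constructor
        rintro u v ⟨a, b, rfl, rfl, hab⟩
        exact ⟨b, a, rfl, rfl, hab.symm⟩
      loopless := by
        constructor
        rintro u ⟨a, b, rfl, hba, hab⟩
        exact hab.ne (φ.injective hba).symm } with hKKdef
  have hKKadj : ∀ {u v}, KK.Adj u v ↔ ∃ a b, φ a = u ∧ φ b = v ∧ H.Adj a b := Iff.rfl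
  set rk : W → ℕ := fun a => (Finset.univ.filter fun b => rh b a).card with hrkdef
  have hrkmono : ∀ {a b}, rh a b → rk a < rk b := by
    intro a b hab
    apply Finset.card_lt_card
    constructor
    · intro c hc
      simp only [Finset.mem_filter, Finset.mem_univ, true_and] at hc ⊢
      exact hrh.trans _ _ _ hc hab
    · intro hsub
      have : a ∈ Finset.univ.filter fun b' => rh b' b := by
        simp only [Finset.mem_filter, Finset.mem_univ, true_and]
        exact hab
      have := hsub this
      simp only [Finset.mem_filter, Finset.mem_univ, true_and] at this
      exact hrh.irrefl a this
  have hrkinj : Function.Injective rk := by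
    intro a b hab
    by_contra hne
    rcases (show rh a b ∨ a = b ∨ rh b a by have := hrh.trichotomous a b; tauto) with h | h | h
    · exact absurd hab (Nat.ne_of_lt (hrkmono h))
    · exact hne h
    · exact absurd hab.symm (Nat.ne_of_lt (hrkmono h))
  have hrklt : ∀ a, rk a < Fintype.card W := by
    intro a
    have hsub : (Finset.univ.filter fun b => rh b a) ⊆ Finset.univ.erase a := by
      intro c hc
      simp only [Finset.mem_filter, Finset.mem_univ, true_and] at hc
      refine Finset.mem_erase.2 ⟨fun h => hrh.irrefl a (h ▸ hc), Finset.mem_univ _⟩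
    calc rk a ≤ (Finset.univ.erase a).card := Finset.card_le_card hsub
      _ < Finset.univ.card := Finset.card_erase_lt_of_mem (Finset.mem_univ a)
      _ = Fintype.card W := rfl
  set eV := Fintype.equivFin V
  set rank : V → ℕ := fun v => if h : ∃ a, φ a = v then rk h.choose else
    Fintype.card W + (eV v : ℕ) with hrankdef
  have hrankphi : ∀ a, rank (φ a) = rk a := by
    intro a
    have h : ∃ a', φ a' = φ a := ⟨a, rfl⟩
    have : rank (φ a) = rk h.choose := dif_pos h
    rw [this, φ.injective h.choose_spec]
  have hrankinj : Function.Injective rank := by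
    intro u v huv
    by_cases hu : ∃ a, φ a = u <;> by_cases hv : ∃ b, φ b = v
    · obtain ⟨a, rfl⟩ := hu
      obtain ⟨b, rfl⟩ := hv
      rw [hrankphi, hrankphi] at huv
      rw [hrkinj huv]
    · obtain ⟨a, rfl⟩ := hu
      rw [hrankphi] at huv
      rw [hrankdef] at huv
      simp only [dif_neg hv] at huv
      exact absurd huv (Nat.ne_of_lt (lt_of_lt_of_le (hrklt a) (Nat.le_add_right _ _)))
    · obtain ⟨b, rfl⟩ := hv
      rw [hrankphi] at huv
      rw [hrankdef] at huv
      simp only [dif_neg hu] at huv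
      exact absurd huv.symm (Nat.ne_of_lt (lt_of_lt_of_le (hrklt b) (Nat.le_add_right _ _)))
    · rw [hrankdef] at huv
      simp only [dif_neg hu, dif_neg hv, Nat.add_left_cancel_iff] at huv
      exact eV.injective (Fin.ext huv)
  refine ⟨KK, fun u v => rank u < rank v, sto_of_rank rank hrankinj, ?_, ?_⟩
  · intro a b hab
    exact ⟨a, b, rfl, rfl, hXH hab⟩
  · rintro x ⟨x', rfl⟩
    have hT : {y | y ∈ Set.range φ ∧ rank y < rank (φ x') ∧ KK.Adj y (φ x')} =
        φ '' {a | rh a x' ∧ H.Adj a x'} := by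
      ext y
      constructor
      · rintro ⟨⟨a, rfl⟩, hrnk, hadj⟩
        obtain ⟨a', b', ha', hb', hab⟩ := hadj
        rw [show a' = a from φ.injective ha', show b' = x' from φ.injective hb'] at hab
        refine ⟨a, ⟨?_, hab⟩, rfl⟩
        rcases (show rh a x' ∨ a = x' ∨ rh x' a by have := hrh.trichotomous a x'; tauto) with h | h | h
        · exact h
        · exact absurd hrnk (by rw [h]; exact lt_irrefl _)
        · rw [hrankphi, hrankphi] at hrnk
          exact absurd hrnk (Nat.lt_asymm (hrkmono h))
      · rintro ⟨a, ⟨har, hadj⟩, rfl⟩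
        refine ⟨⟨a, rfl⟩, ?_, ⟨a, x', rfl, rfl, hadj⟩⟩
        rw [hrankphi, hrankphi]
        exact hrkmono har
    constructor
    · rw [hT]
      rintro y ⟨a, ha, rfl⟩ z ⟨b, hb, rfl⟩ hyz
      have hab : a ≠ b := fun h => hyz (h ▸ rfl)
      have := (hcl x').1 ha hb hab
      exact ⟨a, b, rfl, rfl, this⟩
    · rw [hT, Set.ncard_image_of_injective _ φ.injective]
      exact (hcl x').2

lemma ball_center {V : Type} (G : SimpleGraph V) (A : Set V) (r : ℕ)
    (hconn : (G.induce A).Connected)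
    (hrad : ∃ x : A, ∀ y : A, (G.induce A).dist x y ≤ r) :
    ∃ x ∈ A, ∀ u ∈ A, ∃ W : G.Walk x u, (∀ a ∈ W.support, a ∈ A) ∧ W.length ≤ r := by
  obtain ⟨xc, hxc⟩ := hrad
  refine ⟨xc.1, xc.2, ?_⟩
  intro u hu
  have hreach : (G.induce A).Reachable xc ⟨u, hu⟩ := hconn.preconnected xc ⟨u, hu⟩
  obtain ⟨W0, hW0len⟩ := hreach.exists_walk_length_eq_dist
  have hlen : W0.length ≤ r := by rw [hW0len]; exact hxc ⟨u, hu⟩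
  refine ⟨W0.map (SimpleGraph.Embedding.induce A).toHom, ?_, ?_⟩
  · intro a ha
    have h3 : a ∈ W0.support.map (SimpleGraph.Embedding.induce (G := G) A).toHom := by
      have h4 := SimpleGraph.Walk.support_map (SimpleGraph.Embedding.induce A).toHom W0
      exact h4 ▸ ha
    obtain ⟨b, hb, rfl⟩ := List.mem_map.1 h3
    exact b.2
  · exact (SimpleGraph.Walk.length_map _ W0).trans_le hlen


lemma sum_ncard_fibers_le {ι κo : Type*} [Fintype ι] [Fintype κo] (g : ι → Option κo) :
    ∑ k : κo, {i | g i = some k}.ncard ≤ Fintype.card ι := by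
  classical
  have heq : ∀ k : κo, {i | g i = some k}.ncard =
      (Finset.univ.filter fun i => g i = some k).card := by
    intro k
    rw [show {i | g i = some k} = ↑(Finset.univ.filter fun i => g i = some k) by
      ext i; simp]
    exact Set.ncard_coe_finset _
  calc ∑ k : κo, {i | g i = some k}.ncard
      = ∑ k : κo, (Finset.univ.filter fun i => g i = some k).card := by
        exact Finset.sum_congr rfl fun k _ => heq k
    _ = (Finset.univ.biUnion fun k : κo => Finset.univ.filter fun i => g i = some k).card := by
        rw [Finset.card_biUnion]
        intro k1 _ k2 _ hk
        rw [Function.onFun, Finset.disjoint_left]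
        intro i hi1 hi2
        simp only [Finset.mem_filter] at hi1 hi2
        exact hk (Option.some_injective _ (hi1.2 ▸ hi2.2 ▸ rfl : some k1 = some k2))
    _ ≤ Finset.univ.card := Finset.card_le_card (Finset.subset_univ _)
    _ = Fintype.card ι := rfl

set_option maxHeartbeats 2000000 in
/-- The per-colour-set bound: a graph on `Fin P` whose edges are witnessed by
disjoint connected pieces inside the colour classes `I` has few edges. -/
lemma perI {V : Type} [Fintype V] (G : SimpleGraph V) (r : ℕ) {N P : ℕ} (c : V → Fin N)
    (I : Finset (Fin N)) (hIcard : I.card ≤ 2 * r + 2)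
    (htw : ∀ K : (G.induce {v | c v ∈ I}).ConnectedComponent,
        treeWidth ((G.induce {v | c v ∈ I}).induce K.supp) ≤ I.card - 1)
    (B : Fin P → Set V) (hdisj : Pairwise fun i j => Disjoint (B i) (B j))
    (xc : Fin P → V)
    (M : SimpleGraph (Fin P))
    (hdata : ∀ i j, M.Adj i j →
      ∃ (A1 A2 : Set V) (u v : V),
        A1 ⊆ B i ∧ A2 ⊆ B j ∧ A1 ⊆ {w | c w ∈ I} ∧ A2 ⊆ {w | c w ∈ I} ∧
        u ∈ A1 ∧ v ∈ A2 ∧ G.Adj u v ∧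
        (∀ D : Set V, A1 ⊆ D → ∀ a ∈ A1, ∃ (ha : a ∈ D) (hx : xc i ∈ D),
          (G.induce D).Reachable ⟨a, ha⟩ ⟨xc i, hx⟩) ∧
        (∀ D : Set V, A2 ⊆ D → ∀ a ∈ A2, ∃ (ha : a ∈ D) (hx : xc j ∈ D),
          (G.induce D).Reachable ⟨a, ha⟩ ⟨xc j, hx⟩)) :
    M.edgeSet.ncard ≤ (2 * r + 1) * P := by
  classical
  set U : Set V := {w | c w ∈ I} with hUdef
  set GI := G.induce U with hGIdef
  haveI : Fintype GI.ConnectedComponent :=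
    Fintype.ofSurjective GI.connectedComponentMk (fun q => q.exists_rep)
  choose A1c A2c uc vc hA1B hA2B hA1U hA2U huA hvA hGuv hre1 hre2 using hdata
  -- each edge joins vertices in the same component, and the centres lie in U
  have hsame : ∀ i j (hm : M.Adj i j), ∃ (hi : xc i ∈ U) (hj : xc j ∈ U),
      GI.connectedComponentMk ⟨xc i, hi⟩ = GI.connectedComponentMk ⟨xc j, hj⟩ := by
    intro i j hm
    obtain ⟨hu, hxi, hr1⟩ := hre1 i j hm U (hA1U i j hm) _ (huA i j hm)
    obtain ⟨hv, hxj, hr2⟩ := hre2 i j hm U (hA2U i j hm) _ (hvA i j hm)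
    have hadj : GI.Adj ⟨uc i j hm, hu⟩ ⟨vc i j hm, hv⟩ := hGuv i j hm
    exact ⟨hxi, hxj, SimpleGraph.ConnectedComponent.eq.2
      ((hr1.symm.trans hadj.reachable).trans hr2)⟩
  set gfun : Fin P → Option GI.ConnectedComponent := fun i =>
    if hxi : xc i ∈ U then some (GI.connectedComponentMk ⟨xc i, hxi⟩) else none with hgdef
  have hgxc : ∀ i κ, gfun i = some κ →
      ∃ hxi : xc i ∈ U, GI.connectedComponentMk ⟨xc i, hxi⟩ = κ := by
    intro i κ hgi
    by_cases hxi : xc i ∈ U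
    · refine ⟨hxi, ?_⟩
      have he : gfun i = some (GI.connectedComponentMk ⟨xc i, hxi⟩) := dif_pos hxi
      rw [he] at hgi
      exact Option.some_injective _ hgi
    · rw [show gfun i = none from dif_neg hxi] at hgi
      exact absurd hgi (by simp)
  have hgsame : ∀ i j, M.Adj i j → gfun i = gfun j := by
    intro i j hm
    obtain ⟨hi, hj, hcomp⟩ := hsame i j hm
    rw [show gfun i = some (GI.connectedComponentMk ⟨xc i, hi⟩) from dif_pos hi,
      show gfun j = some (GI.connectedComponentMk ⟨xc j, hj⟩) from dif_pos hj, hcomp]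
  set MIC : GI.ConnectedComponent → SimpleGraph (Fin P) := fun κ =>
    { Adj := fun i j => M.Adj i j ∧ gfun i = some κ
      symm := ⟨fun i j hadj => ⟨hadj.1.symm, (hgsame i j hadj.1).symm.trans hadj.2⟩⟩
      loopless := ⟨fun i hadj => M.loopless.irrefl i hadj.1⟩ } with hMICdef
  have hcover : M.edgeSet ⊆
      ⋃ κ ∈ (Finset.univ : Finset GI.ConnectedComponent), (MIC κ).edgeSet := by
    intro e he
    induction e with
    | _ i j =>
      have hadj : M.Adj i j := he
      obtain ⟨hi, -, -⟩ := hsame i j hadj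
      exact Set.mem_iUnion₂.2 ⟨GI.connectedComponentMk ⟨xc i, hi⟩, Finset.mem_univ _,
        (⟨hadj, dif_pos hi⟩ : (MIC _).Adj i j)⟩
  have hsum : M.edgeSet.ncard ≤
      ∑ κ ∈ (Finset.univ : Finset GI.ConnectedComponent), ((MIC κ).edgeSet).ncard :=
    ncard_le_sum_of_subset_biUnion _ _ _ hcover
  have hperκ : ∀ κ : GI.ConnectedComponent,
      ((MIC κ).edgeSet).ncard ≤ (2 * r + 1) * {i | gfun i = some κ}.ncard := by
    intro κ
    obtain ⟨H, hXH, hHk⟩ := treeWidth_isKTree (GI.induce κ.supp)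
    have hHk' : IsKTree (2 * r + 1) H := isKTree_mono hHk (by
      have h1 : treeWidth (GI.induce κ.supp) ≤ I.card - 1 := htw κ
      omega)
    set φ : ↥κ.supp ↪ V :=
      ⟨fun z => ((z : ↥U) : V), fun a b hab => Subtype.ext (Subtype.ext hab)⟩ with hφdef
    obtain ⟨KK, rr, hsto, hedge, hclq⟩ :=
      ambientKTree φ (GI.induce κ.supp) H hXH (2 * r + 1) hHk'
    set S : Finset V := (Set.toFinite (Set.range φ)).toFinset with hSdef
    have hSmem : ∀ z, z ∈ S ↔ z ∈ Set.range φ := fun z => Set.Finite.mem_toFinset _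
    have hSclq : ∀ x ∈ S, KK.IsClique {y | y ∈ S ∧ rr y x ∧ KK.Adj y x} ∧
        {y | y ∈ S ∧ rr y x ∧ KK.Adj y x}.ncard ≤ 2 * r + 1 := by
      intro x hx
      have hseteq : {y | y ∈ S ∧ rr y x ∧ KK.Adj y x} =
          {y | y ∈ Set.range φ ∧ rr y x ∧ KK.Adj y x} := by
        ext y; simp only [Set.mem_setOf_eq, hSmem]
      rw [hseteq]
      exact hclq x ((hSmem x).1 hx)
    have hrange : ∀ z (hzU : z ∈ U), GI.connectedComponentMk ⟨z, hzU⟩ = κ →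
        z ∈ Set.range φ := fun z hzU hcompz =>
      ⟨⟨⟨z, hzU⟩, (SimpleGraph.ConnectedComponent.mem_supp_iff κ ⟨z, hzU⟩).2 hcompz⟩, rfl⟩
    have hGKK : ∀ a b, a ∈ Set.range φ → b ∈ Set.range φ → G.Adj a b → KK.Adj a b := by
      rintro a b ⟨za, rfl⟩ ⟨zb, rfl⟩ hab
      exact hedge za zb hab
    -- branch sets
    set part : Fin P → Fin P → Set V := fun i j =>
      (if hm : M.Adj i j then A1c i j hm else ∅) ∪
      (if hm : M.Adj j i then A2c j i hm else ∅) with hpartdef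
    set Dc : Fin P → Set V := fun i => ⋃ j, part i j with hDcdef
    set D : Fin P → Set V := fun i => if gfun i = some κ then Dc i else ∅ with hDdef
    have hpartB : ∀ i j, part i j ⊆ B i := by
      intro i j
      simp only [hpartdef]
      apply Set.union_subset
      · by_cases hm : M.Adj i j
        · rw [dif_pos hm]; exact hA1B i j hm
        · rw [dif_neg hm]; exact Set.empty_subset _
      · by_cases hm : M.Adj j i
        · rw [dif_pos hm]; exact hA2B j i hm
        · rw [dif_neg hm]; exact Set.empty_subset _
    have hpartU : ∀ i j, part i j ⊆ U := by
      intro i j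
      simp only [hpartdef]
      apply Set.union_subset
      · by_cases hm : M.Adj i j
        · rw [dif_pos hm]; exact hA1U i j hm
        · rw [dif_neg hm]; exact Set.empty_subset _
      · by_cases hm : M.Adj j i
        · rw [dif_pos hm]; exact hA2U j i hm
        · rw [dif_neg hm]; exact Set.empty_subset _
    have hpartReach : ∀ i j (Dset : Set V), part i j ⊆ Dset → ∀ a ∈ part i j,
        ∃ (ha : a ∈ Dset) (hx : xc i ∈ Dset),
          (G.induce Dset).Reachable ⟨a, ha⟩ ⟨xc i, hx⟩ := by
      intro i j Dset hsubD a ha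
      have hsub1 : (if hm : M.Adj i j then A1c i j hm else ∅) ⊆ Dset :=
        fun z hz => hsubD (by simp only [hpartdef]; exact Or.inl hz)
      have hsub2 : (if hm : M.Adj j i then A2c j i hm else ∅) ⊆ Dset :=
        fun z hz => hsubD (by simp only [hpartdef]; exact Or.inr hz)
      have ha' : a ∈ (if hm : M.Adj i j then A1c i j hm else ∅) ∪
          (if hm : M.Adj j i then A2c j i hm else ∅) := by
        simp only [hpartdef] at ha; exact ha
      rcases ha' with ha1 | ha2
      · by_cases hm : M.Adj i j
        · rw [dif_pos hm] at ha1 hsub1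
          exact hre1 i j hm Dset hsub1 a ha1
        · rw [dif_neg hm] at ha1
          exact absurd ha1 (Set.notMem_empty _)
      · by_cases hm : M.Adj j i
        · rw [dif_pos hm] at ha2 hsub2
          exact hre2 j i hm Dset hsub2 a ha2
        · rw [dif_neg hm] at ha2
          exact absurd ha2 (Set.notMem_empty _)
    have hDcB : ∀ i, Dc i ⊆ B i := fun i => by
      simp only [hDcdef]
      exact Set.iUnion_subset fun j => hpartB i j
    have hDcU : ∀ i, Dc i ⊆ U := fun i => by
      simp only [hDcdef]
      exact Set.iUnion_subset fun j => hpartU i j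
    have hDeq : ∀ i, gfun i = some κ → D i = Dc i := by
      intro i hgi
      simp only [hDdef]
      rw [if_pos hgi]
    have hDeq' : ∀ i, ¬ gfun i = some κ → D i = ∅ := by
      intro i hgi
      simp only [hDdef]
      rw [if_neg hgi]
    have hDB : ∀ i, D i ⊆ B i := by
      intro i
      by_cases hgi : gfun i = some κ
      · rw [hDeq i hgi]; exact hDcB i
      · rw [hDeq' i hgi]; exact Set.empty_subset _
    have hDcReach : ∀ i, ∀ a ∈ Dc i, ∃ (ha : a ∈ Dc i) (hx : xc i ∈ Dc i),
        (G.induce (Dc i)).Reachable ⟨a, ha⟩ ⟨xc i, hx⟩ := by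
      intro i a ha
      have ha' : a ∈ ⋃ j, part i j := by simp only [hDcdef] at ha; exact ha
      obtain ⟨j, hj⟩ := Set.mem_iUnion.1 ha'
      have hsubD : part i j ⊆ Dc i := by
        simp only [hDcdef]; exact Set.subset_iUnion (fun j' => part i j') j
      exact hpartReach i j (Dc i) hsubD a hj
    have hDrange : ∀ i, D i ⊆ Set.range φ := by
      intro i z hz
      by_cases hgi : gfun i = some κ
      swap
      · rw [hDeq' i hgi] at hz; exact absurd hz (Set.notMem_empty _)
      rw [hDeq i hgi] at hz
      have hzU : z ∈ U := hDcU i hz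
      obtain ⟨xiU, hxiκ⟩ := hgxc i κ hgi
      obtain ⟨hz', hx', hr⟩ := hDcReach i z hz
      have hrU : GI.Reachable ⟨z, hzU⟩ ⟨xc i, xiU⟩ :=
        reach_mono_sets (hDcU i) ⟨z, hz'⟩ ⟨xc i, hx'⟩ hr
      have hzκ : GI.connectedComponentMk ⟨z, hzU⟩ = κ := by
        rw [SimpleGraph.ConnectedComponent.eq.2 hrU]
        exact hxiκ
      exact hrange z hzU hzκ
    have hDS : ∀ i, D i ⊆ (S : Set V) := by
      intro i z hz
      have := hDrange i hz
      exact (hSmem z).2 this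
    have hDdisj : Pairwise fun i j => Disjoint (D i) (D j) :=
      fun i j hij => Set.disjoint_of_subset (hDB i) (hDB j) (hdisj hij)
    have hDpre : ∀ i, (KK.induce (D i)).Preconnected := by
      intro i
      by_cases hgi : gfun i = some κ
      swap
      · rw [hDeq' i hgi]; exact empty_preconnected KK
      rw [hDeq i hgi]
      have hGle : G.induce (Dc i) ≤ KK.induce (Dc i) := by
        intro a b hab
        have hDceq : Dc i = D i := (hDeq i hgi).symm
        exact hGKK _ _ (hDrange i (hDceq ▸ a.2)) (hDrange i (hDceq ▸ b.2)) hab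
      intro a b
      obtain ⟨ha', hxa, hra⟩ := hDcReach i a a.2
      obtain ⟨hb', hxb, hrb⟩ := hDcReach i b b.2
      have h1 : (KK.induce (Dc i)).Reachable a ⟨xc i, hxa⟩ := (hra.mono hGle)
      have h2 : (KK.induce (Dc i)).Reachable b ⟨xc i, hxb⟩ := (hrb.mono hGle)
      exact h1.trans h2.symm
    have hreal : ∀ i j, (MIC κ).Adj i j → ∃ u ∈ D i, ∃ v ∈ D j, KK.Adj u v := by
      intro i j hadj
      obtain ⟨hm, hgi⟩ := hadj
      have hgj : gfun j = some κ := (hgsame i j hm).symm.trans hgi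
      have hu : uc i j hm ∈ D i := by
        rw [hDeq i hgi]
        refine Set.mem_iUnion.2 ⟨j, ?_⟩
        simp only [hpartdef]
        exact Or.inl (by rw [dif_pos hm]; exact huA i j hm)
      have hv : vc i j hm ∈ D j := by
        rw [hDeq j hgj]
        refine Set.mem_iUnion.2 ⟨i, ?_⟩
        simp only [hpartdef]
        exact Or.inr (by rw [dif_pos hm]; exact hvA i j hm)
      exact ⟨uc i j hm, hu, vc i j hm, hv,
        hGKK _ _ (hDrange i hu) (hDrange j hv) (hGuv i j hm)⟩
    have hlem := lemB (2 * r + 1) KK rr hsto S hSclq D hDS hDdisj hDpre (MIC κ) hreal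
    have hmono : {i | (D i).Nonempty} ⊆ {i | gfun i = some κ} := by
      intro i hi
      have hi' : (D i).Nonempty := hi
      by_contra hgi
      rw [hDeq' i hgi] at hi'
      exact Set.not_nonempty_empty hi'
    calc ((MIC κ).edgeSet).ncard ≤ (2 * r + 1) * {i | (D i).Nonempty}.ncard := hlem
      _ ≤ (2 * r + 1) * {i | gfun i = some κ}.ncard :=
          Nat.mul_le_mul_left _ (Set.ncard_le_ncard hmono (Set.toFinite _))
  calc M.edgeSet.ncard
      ≤ ∑ κ ∈ (Finset.univ : Finset GI.ConnectedComponent), ((MIC κ).edgeSet).ncard := hsum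
    _ ≤ ∑ κ ∈ (Finset.univ : Finset GI.ConnectedComponent),
        (2 * r + 1) * {i | gfun i = some κ}.ncard :=
        Finset.sum_le_sum fun κ _ => hperκ κ
    _ = (2 * r + 1) * ∑ κ : GI.ConnectedComponent, {i | gfun i = some κ}.ncard := by
        rw [Finset.mul_sum]
    _ ≤ (2 * r + 1) * Fintype.card (Fin P) :=
        Nat.mul_le_mul_left _ (sum_ncard_fibers_le gfun)
    _ = (2 * r + 1) * P := by rw [Fintype.card_fin]


set_option maxHeartbeats 4000000 in
/-- Low tree-width colorings imply bounded expansion. -/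
theorem stmt9 (C : GraphClass) (h : HasLowTreeWidthColorings C) :
    HasBoundedExpansion C := by
  classical
  refine ⟨fun r => ((2 ^ (Classical.choose (h (2 * r + 2) (by omega))) * (2 * r + 2) : ℕ) : ℝ),
    ?_⟩
  intro V _ G hG r
  set N := Classical.choose (h (2 * r + 2) (by omega : 1 ≤ 2 * r + 2)) with hNdef
  obtain ⟨c, hc⟩ := Classical.choose_spec (h (2 * r + 2) (by omega : 1 ≤ 2 * r + 2)) V G hG
  rw [gradR, gradCR]
  apply Real.sSup_le
  swap
  · positivity
  rintro x ⟨P, B, ⟨hballs, hcomplex⟩, rfl⟩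
  -- disjointness of the balls
  have hdisj : Pairwise fun i j => Disjoint (B i) (B j) := by
    intro i j hij
    rw [Set.disjoint_left]
    intro v hvi hvj
    have hsub : ({i, j} : Set (Fin P)) ⊆ {i' | v ∈ B i'} := by
      rintro k (rfl | hk)
      · exact hvi
      · rw [Set.mem_singleton_iff] at hk; exact hk ▸ hvj
    have h2 : ({i, j} : Set (Fin P)).ncard = 2 := Set.ncard_pair hij
    have hle := Set.ncard_le_ncard hsub (Set.toFinite _)
    have := hcomplex v
    omega
  set Q := quotientGraph G B with hQdef
  have hQdata : ∀ i j, Q.Adj i j → ∃ u v, u ∈ B i ∧ v ∈ B j ∧ G.Adj u v := by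
    intro i j hQ
    have hQ' : i ≠ j ∧ ((B i ∩ B j).Nonempty ∨ ∃ u ∈ B i, ∃ x ∈ B j, G.Adj u x) := hQ
    obtain ⟨hij, hor⟩ := hQ'
    rcases hor with hint | ⟨u, hu, w, hw, huw⟩
    · obtain ⟨z, hz1, hz2⟩ := hint
      exact absurd hz2 (Set.disjoint_left.1 (hdisj hij) hz1)
    · exact ⟨u, w, hu, hw, huw⟩
  -- centers & walks
  have hctr : ∀ i, ∃ x ∈ B i, ∀ u ∈ B i, ∃ W : G.Walk x u,
      (∀ a ∈ W.support, a ∈ B i) ∧ W.length ≤ r :=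
    fun i => ball_center G (B i) r (hballs i).1 (hballs i).2
  choose xc hxcB hxcW using hctr
  -- master data for each quotient edge
  have master : ∀ i j, Q.Adj i j →
      ∃ (A1 A2 : Set V) (u v : V),
        A1 ⊆ B i ∧ A2 ⊆ B j ∧ u ∈ A1 ∧ v ∈ A2 ∧ xc i ∈ A1 ∧ xc j ∈ A2 ∧ G.Adj u v ∧
        A1.ncard ≤ r + 1 ∧ A2.ncard ≤ r + 1 ∧
        (∀ D : Set V, A1 ⊆ D → ∀ a ∈ A1, ∃ (ha : a ∈ D) (hx : xc i ∈ D),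
          (G.induce D).Reachable ⟨a, ha⟩ ⟨xc i, hx⟩) ∧
        (∀ D : Set V, A2 ⊆ D → ∀ a ∈ A2, ∃ (ha : a ∈ D) (hx : xc j ∈ D),
          (G.induce D).Reachable ⟨a, ha⟩ ⟨xc j, hx⟩) := by
    intro i j hQ
    obtain ⟨u, v, hu, hv, huv⟩ := hQdata i j hQ
    obtain ⟨W1, hW1s, hW1l⟩ := hxcW i u hu
    obtain ⟨W2, hW2s, hW2l⟩ := hxcW j v hv
    have hncard : ∀ {a b : V} (W : G.Walk a b), W.length ≤ r →
        ({z | z ∈ W.support} : Set V).ncard ≤ r + 1 := by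
      intro a b W hWl
      rw [show {z | z ∈ W.support} = ↑W.support.toFinset by ext z; simp]
      rw [Set.ncard_coe_finset]
      calc W.support.toFinset.card ≤ W.support.length := List.toFinset_card_le _
        _ = W.length + 1 := W.length_support
        _ ≤ r + 1 := by omega
    have hreach : ∀ {a b : V} (W : G.Walk a b) (D : Set V),
        ({z | z ∈ W.support} : Set V) ⊆ D → ∀ z ∈ ({z | z ∈ W.support} : Set V),
        ∃ (hz : z ∈ D) (hx : a ∈ D), (G.induce D).Reachable ⟨z, hz⟩ ⟨a, hx⟩ := by
      intro a b W D hsubD z hz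
      have hzD : z ∈ D := hsubD hz
      have haD : a ∈ D := hsubD W.start_mem_support
      refine ⟨hzD, haD, ?_⟩
      exact (reach_of_walk_subset (W.takeUntil z hz) D
        (fun y hy => hsubD (W.support_takeUntil_subset hz hy)) haD hzD).symm
    exact ⟨{z | z ∈ W1.support}, {z | z ∈ W2.support}, u, v,
      fun z hz => hW1s z hz, fun z hz => hW2s z hz,
      W1.end_mem_support, W2.end_mem_support,
      W1.start_mem_support, W2.start_mem_support, huv,
      hncard W1 hW1l, hncard W2 hW2l,
      fun D hD => hreach W1 D hD, fun D hD => hreach W2 D hD⟩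
  choose A1f A2f uf vf hA1B hA2B huA hvA hxA1 hxA2 hGuv hnc1 hnc2 hreach1 hreach2
    using master
  -- color sets of edges
  set csf : ∀ i j, Q.Adj i j → Finset (Fin N) :=
    fun i j hq => (Set.toFinite (c '' (A1f i j hq ∪ A2f i j hq))).toFinset with hcsfdef
  have hcsf_card : ∀ i j (hq : Q.Adj i j), (csf i j hq).card ≤ 2 * r + 2 := by
    intro i j hq
    have h1 : (csf i j hq).card = (c '' (A1f i j hq ∪ A2f i j hq)).ncard :=
      (Set.ncard_eq_toFinset_card _ (Set.toFinite _)).symm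
    rw [h1]
    calc (c '' (A1f i j hq ∪ A2f i j hq)).ncard
        ≤ (A1f i j hq ∪ A2f i j hq).ncard := Set.ncard_image_le (Set.toFinite _)
      _ ≤ (A1f i j hq).ncard + (A2f i j hq).ncard := Set.ncard_union_le _ _
      _ ≤ (r + 1) + (r + 1) := Nat.add_le_add (hnc1 i j hq) (hnc2 i j hq)
      _ = 2 * r + 2 := by ring
  have hcsf_mem : ∀ i j (hq : Q.Adj i j) (z : V), z ∈ A1f i j hq ∪ A2f i j hq →
      c z ∈ csf i j hq := by
    intro i j hq z hz
    rw [hcsfdef]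
    exact (Set.Finite.mem_toFinset _).2 ⟨z, hz, rfl⟩
  -- symmetric color map on pairs
  set cOf : Fin P → Fin P → Finset (Fin N) := fun i j =>
    if hp : i < j ∧ Q.Adj i j then csf i j hp.2
    else if hp' : j < i ∧ Q.Adj j i then csf j i hp'.2
    else ∅ with hcOfdef
  have hcOf_symm : ∀ i j, cOf i j = cOf j i := by
    intro i j
    rcases lt_trichotomy i j with hij | rfl | hij
    · by_cases hq : Q.Adj i j
      · have e1 : cOf i j = csf i j hq := by
          simp only [hcOfdef]; rw [dif_pos ⟨hij, hq⟩]
        have e2 : cOf j i = csf i j hq := by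
          simp only [hcOfdef]
          rw [dif_neg (fun hcon => lt_asymm hij hcon.1), dif_pos ⟨hij, hq⟩]
        rw [e1, e2]
      · have e1 : cOf i j = ∅ := by
          simp only [hcOfdef]
          rw [dif_neg (fun hcon => hq hcon.2), dif_neg (fun hcon => lt_asymm hij hcon.1)]
        have e2 : cOf j i = ∅ := by
          simp only [hcOfdef]
          rw [dif_neg (fun hcon => hq ((hcon.2 : Q.Adj j i)).symm),
            dif_neg (fun hcon => hq hcon.2)]
        rw [e1, e2]
    · rfl
    · by_cases hq : Q.Adj j i
      · have e1 : cOf j i = csf j i hq := by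
          simp only [hcOfdef]; rw [dif_pos ⟨hij, hq⟩]
        have e2 : cOf i j = csf j i hq := by
          simp only [hcOfdef]
          rw [dif_neg (fun hcon => lt_asymm hij hcon.1), dif_pos ⟨hij, hq⟩]
        rw [e1, e2]
      · have e1 : cOf i j = ∅ := by
          simp only [hcOfdef]
          rw [dif_neg (fun hcon => hq ((hcon.2 : Q.Adj i j)).symm),
            dif_neg (fun hcon => hq hcon.2)]
        have e2 : cOf j i = ∅ := by
          simp only [hcOfdef]
          rw [dif_neg (fun hcon => hq hcon.2), dif_neg (fun hcon => lt_asymm hij hcon.1)]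
        rw [e1, e2]
  set MI : Finset (Fin N) → SimpleGraph (Fin P) := fun I =>
    { Adj := fun i j => Q.Adj i j ∧ cOf i j = I
      symm := ⟨fun i j hadj => ⟨hadj.1.symm, (hcOf_symm j i).trans hadj.2⟩⟩
      loopless := ⟨fun i hadj => Q.loopless.irrefl i hadj.1⟩ } with hMIdef
  have hcover1 : Q.edgeSet ⊆
      ⋃ I ∈ (Finset.univ : Finset (Finset (Fin N))), (MI I).edgeSet := by
    intro e he
    induction e with
    | _ i j =>
      have hadj : Q.Adj i j := he
      exact Set.mem_iUnion₂.2 ⟨cOf i j, Finset.mem_univ _,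
        (⟨hadj, rfl⟩ : (MI (cOf i j)).Adj i j)⟩
  have hsum1 : Q.edgeSet.ncard ≤
      ∑ I ∈ (Finset.univ : Finset (Finset (Fin N))), ((MI I).edgeSet).ncard :=
    ncard_le_sum_of_subset_biUnion _ _ _ hcover1
  -- the per-color-set bound
  have hperI : ∀ I : Finset (Fin N), (MI I).edgeSet.ncard ≤ (2 * r + 2) * P := by
    intro I
    by_cases hIcard : I.card ≤ 2 * r + 2
    swap
    · have hempty : (MI I).edgeSet = ∅ := by
        ext e
        refine ⟨?_, fun hcon => absurd hcon (Set.notMem_empty _)⟩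
        induction e with
        | _ i j =>
          intro he
          obtain ⟨hq, hcof⟩ := (he : (MI I).Adj i j)
          apply hIcard
          rw [← hcof]
          rcases lt_trichotomy i j with hij | rfl | hij
          · rw [show cOf i j = csf i j hq from by
              simp only [hcOfdef]; rw [dif_pos ⟨hij, hq⟩]]
            exact hcsf_card i j hq
          · exact absurd hq (Q.loopless.irrefl i)
          · rw [show cOf i j = csf j i hq.symm from by
              simp only [hcOfdef]
              rw [dif_neg (fun hcon => lt_asymm hij hcon.1), dif_pos ⟨hij, hq.symm⟩]]
            exact hcsf_card j i hq.symm
      rw [hempty]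
      simp
    · -- main case
      have hmemU : ∀ i j (hlt : i < j) (hq : Q.Adj i j), cOf i j = I →
          ∀ z ∈ A1f i j hq ∪ A2f i j hq, z ∈ {w | c w ∈ I} := by
        intro i j hlt hq hcof z hz
        have h1 : cOf i j = csf i j hq := by
          simp only [hcOfdef]; rw [dif_pos ⟨hlt, hq⟩]
        have h2 : c z ∈ I := by rw [← hcof, h1]; exact hcsf_mem i j hq z hz
        exact h2
      have hdataI : ∀ i j, (MI I).Adj i j →
          ∃ (A1 A2 : Set V) (u v : V),
            A1 ⊆ B i ∧ A2 ⊆ B j ∧ A1 ⊆ {w | c w ∈ I} ∧ A2 ⊆ {w | c w ∈ I} ∧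
            u ∈ A1 ∧ v ∈ A2 ∧ G.Adj u v ∧
            (∀ D : Set V, A1 ⊆ D → ∀ a ∈ A1, ∃ (ha : a ∈ D) (hx : xc i ∈ D),
              (G.induce D).Reachable ⟨a, ha⟩ ⟨xc i, hx⟩) ∧
            (∀ D : Set V, A2 ⊆ D → ∀ a ∈ A2, ∃ (ha : a ∈ D) (hx : xc j ∈ D),
              (G.induce D).Reachable ⟨a, ha⟩ ⟨xc j, hx⟩) := by
        intro i j hadj
        obtain ⟨hq, hcof⟩ := hadj
        rcases lt_trichotomy i j with hlt | rfl | hlt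
        · exact ⟨A1f i j hq, A2f i j hq, uf i j hq, vf i j hq,
            hA1B i j hq, hA2B i j hq,
            (fun z hz => hmemU i j hlt hq hcof z (Or.inl hz)),
            (fun z hz => hmemU i j hlt hq hcof z (Or.inr hz)),
            huA i j hq, hvA i j hq, hGuv i j hq,
            hreach1 i j hq, hreach2 i j hq⟩
        · exact absurd hq (Q.loopless.irrefl i)
        · have hq' : Q.Adj j i := hq.symm
          have hcof' : cOf j i = I := (hcOf_symm j i).trans hcof
          exact ⟨A2f j i hq', A1f j i hq', vf j i hq', uf j i hq',
            hA2B j i hq', hA1B j i hq',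
            (fun z hz => hmemU j i hlt hq' hcof' z (Or.inr hz)),
            (fun z hz => hmemU j i hlt hq' hcof' z (Or.inl hz)),
            hvA j i hq', huA j i hq', (hGuv j i hq').symm,
            hreach2 j i hq', hreach1 j i hq'⟩
      calc (MI I).edgeSet.ncard
          ≤ (2 * r + 1) * P := perI G r c I hIcard (hc I hIcard) B hdisj xc (MI I) hdataI
        _ ≤ (2 * r + 2) * P := Nat.mul_le_mul_right _ (by omega)
  have htot : Q.edgeSet.ncard ≤ 2 ^ N * ((2 * r + 2) * P) := by
    calc Q.edgeSet.ncard
        ≤ ∑ I ∈ (Finset.univ : Finset (Finset (Fin N))), ((MI I).edgeSet).ncard := hsum1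
      _ ≤ ∑ _I ∈ (Finset.univ : Finset (Finset (Fin N))), (2 * r + 2) * P :=
          Finset.sum_le_sum fun I _ => hperI I
      _ = (Finset.univ : Finset (Finset (Fin N))).card * ((2 * r + 2) * P) := by
          rw [Finset.sum_const, smul_eq_mul]
      _ = 2 ^ N * ((2 * r + 2) * P) := by
          rw [Finset.card_univ, Fintype.card_finset, Fintype.card_fin]
  rcases Nat.eq_zero_or_pos P with rfl | hP
  · rw [Nat.cast_zero, div_zero]
    positivity
  · rw [div_le_iff₀ (by exact_mod_cast hP : (0 : ℝ) < (P : ℝ))]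
    calc ((Q.edgeSet.ncard : ℕ) : ℝ) ≤ ((2 ^ N * ((2 * r + 2) * P) : ℕ) : ℝ) :=
          Nat.cast_le.2 htot
      _ = ((2 ^ N * (2 * r + 2) : ℕ) : ℝ) * (P : ℝ) := by push_cast; ring
end
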